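/- arXiv:1411.6247 — 6 statements merged into one kernel-verified Lean document; each statement's English description precedes it below -/
import Mathlib

section
/- Let S = I₁ + I₂ + ... + Iₙ be a sum of independent Bernoulli random variables with P(Iᵢ = 1) = pᵢ, and let Λ be a Poisson random variable with mean p₁ + ... + pₙ. Then the total variation distance between the law of S and the law of Λ, namely (1/2) Σ_{k≥0} |P(S = k) − P(Λ = k)|, is at most Σᵢ pᵢ². -/
/-!
The law of `S = ∑ Iᵢ` is the convolution of the Bernoulli laws `Ber(pᵢ)`, and `Poi(∑ pᵢ)` is the
convolution of the `Poi(pᵢ)`. Since `f * g - f' * g' = (f - f') * g + f' * (g - g')`, convolving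
with a probability sequence does not increase the `ℓ¹` distance, so by induction
`‖law S - Poi(∑ pᵢ)‖₁ ≤ ∑ ‖Ber(pᵢ) - Poi(pᵢ)‖₁`, and a direct computation gives
`‖Ber(p) - Poi(p)‖₁ = 2p(1 - e⁻ᵖ) ≤ 2p²`.
-/

open MeasureTheory ProbabilityTheory Finset
open scoped Nat

noncomputable section

namespace LeCam

def convSeq (f g : ℕ → ℝ) (n : ℕ) : ℝ :=
  ∑ x ∈ antidiagonal n, f x.1 * g x.2

def poissonSeq (t : ℝ) (k : ℕ) : ℝ :=
  Real.exp (-t) * t ^ k / k !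

def bernoulliSeq (q : ℝ) (k : ℕ) : ℝ :=
  if k = 0 then 1 - q else if k = 1 then q else 0

def lawSeq {Ω : Type*} [MeasurableSpace Ω] (μ : Measure Ω) (X : Ω → ℕ) (k : ℕ) : ℝ :=
  μ.real (X ⁻¹' {k})

section Convolution

variable {f f' g g' : ℕ → ℝ}

lemma abs_convSeq_le (f g : ℕ → ℝ) (n : ℕ) :
    |convSeq f g n| ≤ convSeq (fun k => |f k|) (fun k => |g k|) n :=
  (abs_sum_le_sum_abs _ _).trans_eq (by simp only [convSeq, abs_mul])

lemma summable_convSeq_abs (hf : Summable fun k => |f k|) (hg : Summable fun k => |g k|) :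
    Summable (convSeq (fun k => |f k|) (fun k => |g k|)) :=
  (summable_norm_sum_mul_antidiagonal_of_summable_norm (f := fun k => |f k|)
    (g := fun k => |g k|) (by simpa using hf) (by simpa using hg)).of_norm

lemma summable_abs_convSeq (hf : Summable fun k => |f k|) (hg : Summable fun k => |g k|) :
    Summable fun n => |convSeq f g n| :=
  .of_nonneg_of_le (fun _ => abs_nonneg _) (abs_convSeq_le f g) (summable_convSeq_abs hf hg)

lemma tsum_abs_convSeq_le (hf : Summable fun k => |f k|) (hg : Summable fun k => |g k|) :
    ∑' n, |convSeq f g n| ≤ (∑' k, |f k|) * ∑' k, |g k| := by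
  rw [tsum_mul_tsum_eq_tsum_sum_antidiagonal_of_summable_norm (f := fun k => |f k|)
    (g := fun k => |g k|) (by simpa using hf) (by simpa using hg)]
  exact (summable_abs_convSeq hf hg).tsum_le_tsum (abs_convSeq_le f g) (summable_convSeq_abs hf hg)

lemma convSeq_sub_convSeq (f f' g g' : ℕ → ℝ) (n : ℕ) :
    convSeq f g n - convSeq f' g' n = convSeq (f - f') g n + convSeq f' (g - g') n := by
  simp only [convSeq, Pi.sub_apply, ← sum_add_distrib, ← sum_sub_distrib]
  exact sum_congr rfl fun _ _ => by ring

lemma tsum_abs_convSeq_sub_convSeq_le (hf : Summable fun k => |f k|)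
    (hf' : Summable fun k => |f' k|) (hg : Summable fun k => |g k|)
    (hg' : Summable fun k => |g' k|) :
    ∑' n, |convSeq f g n - convSeq f' g' n|
      ≤ (∑' k, |f k - f' k|) * (∑' k, |g k|) + (∑' k, |f' k|) * ∑' k, |g k - g' k| := by
  have hff' : Summable fun k => |(f - f') k| :=
    .of_nonneg_of_le (fun _ => abs_nonneg _) (fun k => abs_sub (f k) (f' k)) (hf.add hf')
  have hgg' : Summable fun k => |(g - g') k| :=
    .of_nonneg_of_le (fun _ => abs_nonneg _) (fun k => abs_sub (g k) (g' k)) (hg.add hg')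
  have h₁ := summable_abs_convSeq hff' hg
  have h₂ := summable_abs_convSeq hf' hgg'
  calc ∑' n, |convSeq f g n - convSeq f' g' n|
      ≤ ∑' n, (|convSeq (f - f') g n| + |convSeq f' (g - g') n|) := by
        refine Summable.tsum_le_tsum (fun n => ?_) ?_ (h₁.add h₂)
        · rw [convSeq_sub_convSeq]
          exact abs_add_le _ _
        · refine .of_nonneg_of_le (fun _ => abs_nonneg _) (fun n => ?_) (h₁.add h₂)
          rw [convSeq_sub_convSeq]
          exact abs_add_le _ _
    _ = ∑' n, |convSeq (f - f') g n| + ∑' n, |convSeq f' (g - g') n| := h₁.tsum_add h₂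
    _ ≤ _ := add_le_add (tsum_abs_convSeq_le hff' hg) (tsum_abs_convSeq_le hf' hgg')

end Convolution

lemma poissonSeq_nonneg {t : ℝ} (ht : 0 ≤ t) (k : ℕ) : 0 ≤ poissonSeq t k := by
  unfold poissonSeq; positivity

lemma hasSum_poissonSeq {t : ℝ} (ht : 0 ≤ t) : HasSum (poissonSeq t) 1 :=
  hasSum_one_poissonMeasure ⟨t, ht⟩

lemma convSeq_poissonSeq (s t : ℝ) :
    convSeq (poissonSeq s) (poissonSeq t) = poissonSeq (s + t) := by
  funext n
  simp only [convSeq, poissonSeq, neg_add, Real.exp_add, (Commute.all s t).add_pow',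
    nsmul_eq_mul, mul_sum, sum_div]
  refine sum_congr rfl fun ⟨a, b⟩ hab => ?_
  obtain rfl : a + b = n := HasAntidiagonal.mem_antidiagonal.mp hab
  rw [Nat.cast_add_choose]
  field_simp

lemma bernoulliSeq_eq_zero {q : ℝ} {k : ℕ} (hk : 2 ≤ k) : bernoulliSeq q k = 0 := by
  simp [bernoulliSeq, show k ≠ 0 by omega, show k ≠ 1 by omega]

lemma hasSum_bernoulliSeq (q : ℝ) : HasSum (bernoulliSeq q) 1 := by
  have h : HasSum (bernoulliSeq q) (∑ k ∈ range 2, bernoulliSeq q k) :=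
    hasSum_sum_of_ne_finset_zero fun k hk => bernoulliSeq_eq_zero (by simp at hk; omega)
  simpa [sum_range_succ, bernoulliSeq] using h

lemma tsum_abs_poissonSeq {t : ℝ} (ht : 0 ≤ t) : ∑' k, |poissonSeq t k| = 1 := by
  simp_rw [abs_of_nonneg (poissonSeq_nonneg ht _)]
  exact (hasSum_poissonSeq ht).tsum_eq

lemma tsum_abs_bernoulliSeq_sub_poissonSeq_le {q : ℝ} (hq : 0 ≤ q) :
    ∑' k, |bernoulliSeq q k - poissonSeq q k| ≤ 2 * q ^ 2 := by
  have htail : HasSum (fun k => |bernoulliSeq q (k + 2) - poissonSeq q (k + 2)|)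
      (1 - poissonSeq q 0 - poissonSeq q 1) := by
    have h := (hasSum_nat_add_iff' (f := poissonSeq q) 2).mpr (hasSum_poissonSeq hq)
    simp only [sum_range_succ, sum_range_zero, zero_add] at h
    have hterm : (fun k => |bernoulliSeq q (k + 2) - poissonSeq q (k + 2)|)
        = fun k => poissonSeq q (k + 2) := by
      funext k
      rw [bernoulliSeq_eq_zero (by omega), zero_sub, abs_neg,
        abs_of_nonneg (poissonSeq_nonneg hq _)]
    rw [hterm, sub_sub]
    exact h
  have h := ((hasSum_nat_add_iff (f := fun k => |bernoulliSeq q k - poissonSeq q k|) 2).mp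
    htail).tsum_eq
  simp only [sum_range_succ, sum_range_zero, zero_add] at h
  have hb₀ : bernoulliSeq q 0 = 1 - q := rfl
  have hb₁ : bernoulliSeq q 1 = q := rfl
  have hπ₀ : poissonSeq q 0 = Real.exp (-q) := by simp [poissonSeq]
  have hπ₁ : poissonSeq q 1 = Real.exp (-q) * q := by simp [poissonSeq]
  have he : 1 - q ≤ Real.exp (-q) := by linarith [Real.add_one_le_exp (-q)]
  have he' : Real.exp (-q) ≤ 1 := Real.exp_le_one_iff.mpr (by linarith)
  rw [h, hb₀, hb₁, hπ₀, hπ₁, abs_of_nonpos (by linarith), abs_of_nonneg (by nlinarith)]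
  nlinarith [mul_nonneg hq (sub_nonneg.mpr he)]

section Law

variable {Ω : Type*} [MeasurableSpace Ω] {μ : Measure Ω} {X Y : Ω → ℕ}

lemma hasSum_lawSeq [IsFiniteMeasure μ] (hX : Measurable X) :
    HasSum (lawSeq μ X) (μ.real Set.univ) := by
  have hfib : ∑' k, μ (X ⁻¹' {k}) = μ Set.univ := by
    rw [← measure_iUnion (pairwise_disjoint_fiber X) fun k => hX (measurableSet_singleton k),
      ← Set.preimage_iUnion, Set.iUnion_of_singleton, Set.preimage_univ]
  have h := ENNReal.hasSum_toReal (hfib ▸ measure_ne_top μ Set.univ)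
  rwa [← ENNReal.tsum_toReal_eq fun k => measure_ne_top μ _, hfib] at h

lemma tsum_abs_lawSeq [IsProbabilityMeasure μ] (hX : Measurable X) :
    ∑' k, |lawSeq μ X k| = 1 := by
  have h₀ : ∀ k, 0 ≤ lawSeq μ X k := fun _ => measureReal_nonneg
  simp_rw [abs_of_nonneg (h₀ _)]
  rw [(hasSum_lawSeq hX).tsum_eq, probReal_univ]

lemma lawSeq_eq_bernoulliSeq [IsProbabilityMeasure μ] (hX : Measurable X)
    (hX₁ : ∀ ω, X ω ≤ 1) : lawSeq μ X = bernoulliSeq (μ.real (X ⁻¹' {1})) := by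
  funext k
  match k with
  | 0 =>
    have h : X ⁻¹' {0} = (X ⁻¹' {1})ᶜ := by
      ext ω; have := hX₁ ω; simp; omega
    rw [lawSeq, h, probReal_compl_eq_one_sub (hX (measurableSet_singleton 1))]
    rfl
  | 1 => rfl
  | k + 2 =>
    have h : X ⁻¹' {k + 2} = ∅ := by
      ext ω; have := hX₁ ω; simp; omega
    rw [lawSeq, h, bernoulliSeq_eq_zero (by omega), measureReal_empty]

lemma lawSeq_add_eq_convSeq [IsFiniteMeasure μ] (hX : Measurable X) (hY : Measurable Y)
    (hXY : IndepFun X Y μ) :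
    lawSeq μ (X + Y) = convSeq (lawSeq μ X) (lawSeq μ Y) := by
  funext n
  have h : (X + Y) ⁻¹' {n} = ⋃ x ∈ antidiagonal n, X ⁻¹' {x.1} ∩ Y ⁻¹' {x.2} := by
    ext ω; simp
  have hd : (antidiagonal n : Set (ℕ × ℕ)).PairwiseDisjoint
      fun x => X ⁻¹' {x.1} ∩ Y ⁻¹' {x.2} := by
    rintro x - y - hxy
    refine Set.disjoint_left.mpr fun ω hx hy => hxy ?_
    simp only [Set.mem_inter_iff, Set.mem_preimage, Set.mem_singleton_iff] at hx hy
    exact Prod.ext (hx.1.symm.trans hy.1) (hx.2.symm.trans hy.2)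
  rw [lawSeq, h, measureReal_biUnion_finset hd fun x _ =>
    (hX (measurableSet_singleton _)).inter (hY (measurableSet_singleton _))]
  refine sum_congr rfl fun x _ => ?_
  rw [measureReal_def, hXY.measure_inter_preimage_eq_mul _ _ (measurableSet_singleton _)
    (measurableSet_singleton _), ENNReal.toReal_mul]
  rfl

theorem tsum_abs_lawSeq_sum_sub_poissonSeq_le {ι : Type*} [IsProbabilityMeasure μ]
    {I : ι → Ω → ℕ} {p : ι → ℝ} (hmeas : ∀ i, Measurable (I i)) (hval : ∀ i ω, I i ω ≤ 1)
    (hindep : iIndepFun I μ) (hp : ∀ i, μ.real (I i ⁻¹' {1}) = p i) (s : Finset ι) :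
    ∑' k, |lawSeq μ (∑ i ∈ s, I i) k - poissonSeq (∑ i ∈ s, p i) k|
      ≤ 2 * ∑ i ∈ s, p i ^ 2 := by
  classical
  induction s using Finset.induction_on with
  | empty =>
    have h : ∀ k, lawSeq μ 0 k - poissonSeq 0 k = 0 := by
      intro k; cases k <;> simp [lawSeq, poissonSeq, Set.preimage]
    simp only [sum_empty, h, abs_zero, tsum_zero, mul_zero, le_refl]
  | insert j s hj ih =>
    have hp₀ : ∀ i, 0 ≤ p i := fun i => hp i ▸ measureReal_nonneg
    have hs₀ : 0 ≤ ∑ i ∈ s, p i := sum_nonneg fun i _ => hp₀ i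
    have hS : Measurable (∑ i ∈ s, I i) := by
      rw [Finset.sum_fn]; exact s.measurable_sum fun i _ => hmeas i
    have hlaw : lawSeq μ (∑ i ∈ insert j s, I i)
        = convSeq (bernoulliSeq (p j)) (lawSeq μ (∑ i ∈ s, I i)) := by
      rw [sum_insert hj, lawSeq_add_eq_convSeq (hmeas j) hS
        (hindep.indepFun_finsetSum_of_notMem hmeas hj).symm,
        lawSeq_eq_bernoulliSeq (hmeas j) (hval j), hp j]
    rw [hlaw, sum_insert hj, ← convSeq_poissonSeq, sum_insert hj]
    calc _ ≤ (∑' k, |bernoulliSeq (p j) k - poissonSeq (p j) k|) * (∑' k, |lawSeq μ _ k|)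
          + (∑' k, |poissonSeq (p j) k|)
            * ∑' k, |lawSeq μ (∑ i ∈ s, I i) k - poissonSeq (∑ i ∈ s, p i) k| :=
          tsum_abs_convSeq_sub_convSeq_le (hasSum_bernoulliSeq _).summable.abs
            (hasSum_poissonSeq (hp₀ j)).summable.abs (hasSum_lawSeq hS).summable.abs
            (hasSum_poissonSeq hs₀).summable.abs
      _ ≤ 2 * p j ^ 2 * 1 + 1 * (2 * ∑ i ∈ s, p i ^ 2) := by
          rw [tsum_abs_lawSeq hS, tsum_abs_poissonSeq (hp₀ j)]
          gcongr
          exact tsum_abs_bernoulliSeq_sub_poissonSeq_le (hp₀ j)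
      _ = _ := by ring

end Law

end LeCam

end

open LeCam in
/-- LeCam's lemma: the total variation distance between the law of a sum of independent
Bernoulli indicators and the Poisson law with matching mean is at most `∑ pᵢ²`. -/
theorem leCam_lemma {Ω : Type*} [MeasurableSpace Ω] (μ : Measure Ω) [IsProbabilityMeasure μ]
    (n : ℕ) (I : Fin n → Ω → ℕ) (p : Fin n → ℝ)
    (hmeas : ∀ i, Measurable (I i))
    (hval : ∀ i ω, I i ω ≤ 1)
    (hindep : iIndepFun I μ)
    (hp : ∀ i, (μ {ω | I i ω = 1}).toReal = p i) :
    (1 / 2) * ∑' k : ℕ,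
        |(μ {ω | (∑ i, I i ω) = k}).toReal -
          Real.exp (-(∑ i, p i)) * (∑ i, p i) ^ k / (Nat.factorial k)|
      ≤ ∑ i, (p i) ^ 2 := by
  have h := tsum_abs_lawSeq_sum_sub_poissonSeq_le hmeas hval hindep hp univ
  simp only [lawSeq, measureReal_def, poissonSeq, Set.preimage, Finset.sum_apply,
    Set.mem_singleton_iff] at h
  linarith
end

section
/- Let Z be a nonnegative random variable with P(Z > t) = (c + o(1)) t^{-κ} as t → +∞, where c > 0 and κ > 0. Let Λ_Z be the mixed Poisson random variable with P(Λ_Z = r) = E[e^{-Z} Z^r / r!]. Then P(Λ_Z > t) = (c + o(1)) t^{-κ} as t → +∞. -/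
open MeasureTheory Filter

noncomputable def pois (z : ℝ) (r : ℕ) : ℝ := Real.exp (-z) * z ^ r / (Nat.factorial r)

lemma hasSum_exp_series (x : ℝ) : HasSum (fun n : ℕ => x ^ n / (Nat.factorial n)) (Real.exp x) := by
  rw [Real.exp_eq_exp_ℝ]
  exact NormedSpace.expSeries_div_hasSum_exp x

lemma hasSum_pois_exp (z θ : ℝ) :
    HasSum (fun r : ℕ => Real.exp (θ * r) * pois z r) (Real.exp (z * Real.exp θ - z)) := by
  have h := (hasSum_exp_series (z * Real.exp θ)).mul_left (Real.exp (-z))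
  have : (fun r : ℕ => Real.exp (-z) * ((z * Real.exp θ) ^ r / (Nat.factorial r)))
      = fun r : ℕ => Real.exp (θ * r) * pois z r := by
    funext r
    rw [pois, mul_pow, ← Real.exp_nat_mul]
    ring_nf
  rw [this] at h
  have h2 : Real.exp (-z) * Real.exp (z * Real.exp θ) = Real.exp (z * Real.exp θ - z) := by
    rw [← Real.exp_add]; congr 1; ring
  rwa [h2] at h

lemma hasSum_pois (z : ℝ) : HasSum (pois z) 1 := by
  have := hasSum_pois_exp z 0
  simpa using this

lemma pois_nonneg {z : ℝ} (hz : 0 ≤ z) (r : ℕ) : 0 ≤ pois z r := by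
  unfold pois; positivity

lemma pois_le_one {z : ℝ} (hz : 0 ≤ z) (r : ℕ) : pois z r ≤ 1 :=
  le_trans (Summable.le_tsum (hasSum_pois z).summable r (fun j _ => pois_nonneg hz j))
    (le_of_eq (hasSum_pois z).tsum_eq)

noncomputable def S (t z : ℝ) : ℝ := ∑' r : ℕ, if t < (r : ℝ) then pois z r else 0

lemma summable_Sterm {z : ℝ} (hz : 0 ≤ z) (t : ℝ) :
    Summable (fun r : ℕ => if t < (r : ℝ) then pois z r else 0) := by
  apply Summable.of_nonneg_of_le (fun r => ?_) (fun r => ?_) (hasSum_pois z).summable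
  · split <;> simp [pois_nonneg hz]
  · split <;> simp [pois_nonneg hz]

lemma S_nonneg {z : ℝ} (hz : 0 ≤ z) (t : ℝ) : 0 ≤ S t z :=
  tsum_nonneg (fun r => by split <;> simp [pois_nonneg hz])

lemma S_le_one {z : ℝ} (hz : 0 ≤ z) (t : ℝ) : S t z ≤ 1 := by
  refine le_trans (Summable.tsum_le_tsum (fun r => ?_) (summable_Sterm hz t) (hasSum_pois z).summable)
    (le_of_eq (hasSum_pois z).tsum_eq)
  split <;> simp [pois_nonneg hz]

lemma S_le_chernoff {z : ℝ} (hz : 0 ≤ z) {θ : ℝ} (hθ : 0 ≤ θ) (t : ℝ) :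
    S t z ≤ Real.exp (z * Real.exp θ - z - θ * t) := by
  have hmaj := (hasSum_pois_exp z θ).mul_left (Real.exp (-(θ * t)))
  have key : S t z ≤ Real.exp (-(θ * t)) * Real.exp (z * Real.exp θ - z) := by
    rw [← hmaj.tsum_eq]
    refine Summable.tsum_le_tsum (fun r => ?_) (summable_Sterm hz t) hmaj.summable
    rcases lt_or_ge t (r : ℝ) with h | h
    · simp only [if_pos h, ← mul_assoc, ← Real.exp_add]
      nth_rewrite 1 [show pois z r = 1 * pois z r by ring]
      apply mul_le_mul_of_nonneg_right _ (pois_nonneg hz r)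
      rw [show (1 : ℝ) = Real.exp 0 by simp]
      apply Real.exp_le_exp.2
      nlinarith [h.le]
    · simp only [if_neg (not_lt.2 h)]
      exact mul_nonneg (Real.exp_nonneg _) (mul_nonneg (Real.exp_nonneg _) (pois_nonneg hz r))
  calc S t z ≤ _ := key
    _ = _ := by rw [← Real.exp_add]; ring_nf

lemma one_sub_S_le_chernoff {z : ℝ} (hz : 0 ≤ z) {θ : ℝ} (hθ : 0 ≤ θ) (t : ℝ) :
    1 - S t z ≤ Real.exp (z * Real.exp (-θ) - z + θ * t) := by
  have hS : HasSum (fun r : ℕ => if t < (r : ℝ) then pois z r else 0) (S t z) :=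
    (summable_Sterm hz t).hasSum
  have hdiff : HasSum (fun r : ℕ => if t < (r : ℝ) then 0 else pois z r) (1 - S t z) := by
    have h := (hasSum_pois z).sub hS
    have heq : (fun r : ℕ => pois z r - (if t < (r : ℝ) then pois z r else 0))
        = fun r : ℕ => if t < (r : ℝ) then 0 else pois z r := by
      funext r; split <;> ring
    rwa [heq] at h
  have hmaj := (hasSum_pois_exp z (-θ)).mul_left (Real.exp (θ * t))
  have key : 1 - S t z ≤ Real.exp (θ * t) * Real.exp (z * Real.exp (-θ) - z) := by
    rw [← hmaj.tsum_eq, ← hdiff.tsum_eq]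
    refine Summable.tsum_le_tsum (fun r => ?_) hdiff.summable hmaj.summable
    rcases lt_or_ge t (r : ℝ) with h | h
    · simp only [if_pos h]
      exact mul_nonneg (Real.exp_nonneg _) (mul_nonneg (Real.exp_nonneg _) (pois_nonneg hz r))
    · simp only [if_neg (not_lt.2 h), ← mul_assoc, ← Real.exp_add]
      nth_rewrite 1 [show pois z r = 1 * pois z r by ring]
      apply mul_le_mul_of_nonneg_right _ (pois_nonneg hz r)
      rw [show (1 : ℝ) = Real.exp 0 by simp]
      apply Real.exp_le_exp.2
      nlinarith [h]
  calc 1 - S t z ≤ _ := key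
    _ = _ := by rw [← Real.exp_add]; ring_nf

section Meas
variable {Ω : Type*} [MeasurableSpace Ω] (μ : Measure Ω) [IsProbabilityMeasure μ]
  (Z : Ω → ℝ)

lemma measurable_pois_comp (hmeas : Measurable Z) (r : ℕ) :
    Measurable (fun ω => pois (Z ω) r) := by
  unfold pois
  exact ((Real.measurable_exp.comp hmeas.neg).mul (hmeas.pow_const r)).div_const _

lemma integrable_pois_comp (hmeas : Measurable Z) (hZ : ∀ ω, 0 ≤ Z ω) (r : ℕ) :
    Integrable (fun ω => pois (Z ω) r) μ := by
  refine (integrable_const (1 : ℝ)).mono'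
    (measurable_pois_comp Z hmeas r).aestronglyMeasurable ?_
  filter_upwards with ω
  rw [Real.norm_eq_abs, abs_of_nonneg (pois_nonneg (hZ ω) r)]
  exact pois_le_one (hZ ω) r

lemma S_eq_toReal {z : ℝ} (hz : 0 ≤ z) (t : ℝ) :
    S t z = (∑' r : ℕ, ENNReal.ofReal (if t < (r : ℝ) then pois z r else 0)).toReal := by
  rw [← ENNReal.ofReal_tsum_of_nonneg (fun r => by split <;> simp [pois_nonneg hz])
    (summable_Sterm hz t)]
  exact (ENNReal.toReal_ofReal (S_nonneg hz t)).symm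

lemma measurable_S_comp (hmeas : Measurable Z) (hZ : ∀ ω, 0 ≤ Z ω) (t : ℝ) :
    Measurable (fun ω => S t (Z ω)) := by
  have heq : (fun ω => S t (Z ω)) = fun ω =>
      (∑' r : ℕ, ENNReal.ofReal (if t < (r : ℝ) then pois (Z ω) r else 0)).toReal := by
    funext ω; exact S_eq_toReal (hZ ω) t
  rw [heq]
  refine Measurable.ennreal_toReal (Measurable.ennreal_tsum (fun r => ?_))
  by_cases h : t < (r : ℝ)
  · simp only [if_pos h]
    exact (measurable_pois_comp Z hmeas r).ennreal_ofReal
  · simp only [if_neg h]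
    simp

lemma integrable_S_comp (hmeas : Measurable Z) (hZ : ∀ ω, 0 ≤ Z ω) (t : ℝ) :
    Integrable (fun ω => S t (Z ω)) μ := by
  refine (integrable_const (1 : ℝ)).mono'
    (measurable_S_comp Z hmeas hZ t).aestronglyMeasurable ?_
  filter_upwards with ω
  rw [Real.norm_eq_abs, abs_of_nonneg (S_nonneg (hZ ω) t)]
  exact S_le_one (hZ ω) t

lemma tsum_integral_swap (hmeas : Measurable Z) (hZ : ∀ ω, 0 ≤ Z ω) (t : ℝ) :
    ∑' r : ℕ, (if t < (r : ℝ) then ∫ ω, pois (Z ω) r ∂μ else 0) = ∫ ω, S t (Z ω) ∂μ := by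
  have hf : ∀ r : ℕ, AEStronglyMeasurable
      (fun ω => if t < (r : ℝ) then pois (Z ω) r else 0) μ := by
    intro r
    by_cases h : t < (r : ℝ)
    · simp only [if_pos h]
      exact (measurable_pois_comp Z hmeas r).aestronglyMeasurable
    · simp only [if_neg h]
      exact aestronglyMeasurable_const
  have hbound : ∀ r : ℕ,
      (∫⁻ ω, ‖if t < (r : ℝ) then pois (Z ω) r else 0‖₊ ∂μ)
        ≤ ∫⁻ ω, ENNReal.ofReal (pois (Z ω) r) ∂μ := by
    intro r
    refine lintegral_mono (fun ω => ?_)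
    by_cases h : t < (r : ℝ)
    · simp only [if_pos h]
      exact le_of_eq (Real.enorm_eq_ofReal (pois_nonneg (hZ ω) r))
    · simp only [if_neg h]
      simp
  have hsum : ∑' r : ℕ, ∫⁻ ω, ENNReal.ofReal (pois (Z ω) r) ∂μ = 1 := by
    rw [← lintegral_tsum (fun r => (measurable_pois_comp Z hmeas r).ennreal_ofReal.aemeasurable)]
    have heq : ∀ ω, ∑' r : ℕ, ENNReal.ofReal (pois (Z ω) r) = 1 := by
      intro ω
      rw [← ENNReal.ofReal_tsum_of_nonneg (pois_nonneg (hZ ω)) (hasSum_pois (Z ω)).summable,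
        (hasSum_pois (Z ω)).tsum_eq]
      simp
    simp only [heq]
    simp [lintegral_const]
  have hne : ∑' r : ℕ, ∫⁻ ω, ‖if t < (r : ℝ) then pois (Z ω) r else 0‖₊ ∂μ ≠ ⊤ := by
    refine ne_top_of_le_ne_top (by simp [hsum]) (ENNReal.tsum_le_tsum hbound)
  have hswap := (integral_tsum hf hne).symm
  unfold S
  rw [← hswap]
  congr 1
  funext r
  by_cases h : t < (r : ℝ) <;> simp [h]

end Meas

lemma exists_theta_upper {a : ℝ} (ha : 0 < a) (ha1 : a < 1) :
    ∃ θ δ : ℝ, 0 < θ ∧ 0 < δ ∧ a * (Real.exp θ - 1) - θ ≤ -δ := by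
  set θ := Real.log ((1 + a) / (2 * a)) with hθdef
  have hgt : 1 < (1 + a) / (2 * a) := by
    rw [lt_div_iff₀ (by linarith)]; linarith
  have hθpos : 0 < θ := Real.log_pos hgt
  have hexp : Real.exp θ = (1 + a) / (2 * a) := Real.exp_log (by linarith)
  refine ⟨θ, θ * (1 - a) / 2, hθpos, by nlinarith, ?_⟩
  have h1 : Real.exp θ - 1 ≤ θ * Real.exp θ := by
    have h2 := Real.add_one_le_exp (-θ)
    have hprod : Real.exp (-θ) * Real.exp θ = 1 := by rw [← Real.exp_add]; simp
    nlinarith [mul_le_mul_of_nonneg_right h2 (Real.exp_pos θ).le]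
  have h3 : a * Real.exp θ = (1 + a) / 2 := by
    rw [hexp]; field_simp
  nlinarith [Real.exp_pos θ]

lemma exists_theta_lower {b : ℝ} (hb : 1 < b) :
    ∃ θ δ : ℝ, 0 < θ ∧ 0 < δ ∧ b * (Real.exp (-θ) - 1) + θ ≤ -δ := by
  set θ := Real.log ((2 * b) / (1 + b)) with hθdef
  have hgt : 1 < (2 * b) / (1 + b) := by
    rw [lt_div_iff₀ (by linarith)]; linarith
  have hθpos : 0 < θ := Real.log_pos hgt
  have hexp : Real.exp (-θ) = (1 + b) / (2 * b) := by
    rw [Real.exp_neg, hθdef, Real.exp_log (by positivity)]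
    rw [inv_div]
  refine ⟨θ, θ * (b - 1) / 2, hθpos, by nlinarith, ?_⟩
  have h1 : θ * Real.exp (-θ) ≤ 1 - Real.exp (-θ) := by
    have h2 := Real.add_one_le_exp θ
    have hprod : Real.exp (-θ) * Real.exp θ = 1 := by rw [← Real.exp_add]; simp
    nlinarith [mul_le_mul_of_nonneg_right h2 (Real.exp_pos (-θ)).le]
  have h3 : b * Real.exp (-θ) = (1 + b) / 2 := by
    rw [hexp]; field_simp
  nlinarith [Real.exp_pos (-θ)]

section Bounds
variable {Ω : Type*} [MeasurableSpace Ω] (μ : Measure Ω) [IsProbabilityMeasure μ]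
  (Z : Ω → ℝ) (hmeas : Measurable Z) (hZ : ∀ ω, 0 ≤ Z ω)

lemma integral_S_upper {a θ δ t : ℝ} (hmeas : Measurable Z) (hZ : ∀ ω, 0 ≤ Z ω)
    (ha : 0 < a) (hθ : 0 < θ) (hkey : a * (Real.exp θ - 1) - θ ≤ -δ) (ht : 0 ≤ t) :
    ∫ ω, S t (Z ω) ∂μ ≤ (μ {ω | a * t < Z ω}).toReal + Real.exp (-δ * t) := by
  have hs : MeasurableSet {ω | a * t < Z ω} := measurableSet_lt measurable_const hmeas
  have hpt : ∀ ω, S t (Z ω) ≤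
      Set.indicator {ω | a * t < Z ω} (fun _ => (1 : ℝ)) ω + Real.exp (-δ * t) := by
    intro ω
    by_cases h : a * t < Z ω
    · simp only [Set.indicator_apply, Set.mem_setOf_eq, if_pos h]
      have := S_le_one (hZ ω) t
      linarith [Real.exp_pos (-δ * t)]
    · simp only [Set.indicator_apply, Set.mem_setOf_eq, if_neg h]
      push_neg at h
      have h1 := S_le_chernoff (hZ ω) hθ.le t
      have h2 : Z ω * Real.exp θ - Z ω - θ * t ≤ -δ * t := by
        have he : (0 : ℝ) ≤ Real.exp θ - 1 := by
          have := Real.add_one_le_exp θ; linarith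
        have h3 : Z ω * (Real.exp θ - 1) ≤ a * t * (Real.exp θ - 1) :=
          mul_le_mul_of_nonneg_right h he
        nlinarith
      calc S t (Z ω) ≤ _ := h1
        _ ≤ Real.exp (-δ * t) := Real.exp_le_exp.2 h2
        _ ≤ 0 + Real.exp (-δ * t) := by linarith
  have hint : Integrable (fun ω =>
      Set.indicator {ω | a * t < Z ω} (fun _ => (1 : ℝ)) ω + Real.exp (-δ * t)) μ :=
    ((integrable_const (1 : ℝ)).indicator hs).add (integrable_const _)
  have hmono := integral_mono_of_nonneg
    (Filter.Eventually.of_forall (fun ω => S_nonneg (hZ ω) t)) hint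
    (Filter.Eventually.of_forall hpt)
  calc ∫ ω, S t (Z ω) ∂μ ≤ _ := hmono
    _ = (μ {ω | a * t < Z ω}).toReal + Real.exp (-δ * t) := by
      rw [integral_add ((integrable_const (1 : ℝ)).indicator hs) (integrable_const _),
        integral_indicator_const (1 : ℝ) hs, integral_const]
      simp
      rfl

lemma integral_S_lower {b θ δ t : ℝ} (hmeas : Measurable Z) (hZ : ∀ ω, 0 ≤ Z ω)
    (hθ : 0 < θ) (hδ : 0 < δ) (hkey : b * (Real.exp (-θ) - 1) + θ ≤ -δ) (ht : 0 ≤ t) :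
    (1 - Real.exp (-δ * t)) * (μ {ω | b * t < Z ω}).toReal ≤ ∫ ω, S t (Z ω) ∂μ := by
  have hs : MeasurableSet {ω | b * t < Z ω} := measurableSet_lt measurable_const hmeas
  have hone : Real.exp (-δ * t) ≤ 1 := by
    rw [show (1 : ℝ) = Real.exp 0 by simp]
    apply Real.exp_le_exp.2; nlinarith
  have hpt : ∀ ω,
      Set.indicator {ω | b * t < Z ω} (fun _ => 1 - Real.exp (-δ * t)) ω ≤ S t (Z ω) := by
    intro ω
    by_cases h : b * t < Z ω
    · simp only [Set.indicator_apply, Set.mem_setOf_eq, if_pos h]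
      have h1 := one_sub_S_le_chernoff (hZ ω) hθ.le t
      have h2 : Z ω * Real.exp (-θ) - Z ω + θ * t ≤ -δ * t := by
        have he : Real.exp (-θ) - 1 ≤ 0 := by
          have h4 : Real.exp (-θ) ≤ 1 := by
            rw [show (1 : ℝ) = Real.exp 0 by simp]
            exact Real.exp_le_exp.2 (by linarith)
          linarith
        have h3 : Z ω * (Real.exp (-θ) - 1) ≤ b * t * (Real.exp (-θ) - 1) :=
          mul_le_mul_of_nonpos_right h.le he
        nlinarith
      have h5 : 1 - S t (Z ω) ≤ Real.exp (-δ * t) :=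
        le_trans h1 (Real.exp_le_exp.2 h2)
      linarith
    · simp only [Set.indicator_apply, Set.mem_setOf_eq, if_neg h]
      exact S_nonneg (hZ ω) t
  have hmono := integral_mono_of_nonneg
    (Filter.Eventually.of_forall (fun ω =>
      Set.indicator_nonneg (fun _ _ => by linarith) ω))
    (integrable_S_comp μ Z hmeas hZ t) (Filter.Eventually.of_forall hpt)
  calc (1 - Real.exp (-δ * t)) * (μ {ω | b * t < Z ω}).toReal
      = ∫ ω, Set.indicator {ω | b * t < Z ω} (fun _ => 1 - Real.exp (-δ * t)) ω ∂μ := by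
        rw [integral_indicator_const _ hs, smul_eq_mul, mul_comm]
        rfl
    _ ≤ _ := hmono

end Bounds

section Limits
variable {Ω : Type*} [MeasurableSpace Ω] (μ : Measure Ω) [IsProbabilityMeasure μ]
  (Z : Ω → ℝ)

lemma tendsto_tail_scaled {c κ : ℝ} (hκ : 0 < κ)
    (htail : Tendsto (fun t : ℝ => t ^ κ * (μ {ω | t < Z ω}).toReal) atTop (nhds c))
    {a : ℝ} (ha : 0 < a) :
    Tendsto (fun t : ℝ => t ^ κ * (μ {ω | a * t < Z ω}).toReal) atTop
      (nhds ((a ^ κ)⁻¹ * c)) := by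
  have hmul : Tendsto (fun t : ℝ => a * t) atTop atTop :=
    Tendsto.const_mul_atTop ha tendsto_id
  have hcomp : Tendsto (fun t : ℝ => (a * t) ^ κ * (μ {ω | a * t < Z ω}).toReal)
      atTop (nhds c) := htail.comp hmul
  have h2 := hcomp.const_mul ((a ^ κ)⁻¹ : ℝ)
  refine h2.congr' ?_
  filter_upwards [eventually_ge_atTop (0 : ℝ)] with t ht
  rw [Real.mul_rpow ha.le ht]
  have hane : (a : ℝ) ^ κ ≠ 0 := (Real.rpow_pos_of_pos ha κ).ne'
  field_simp

end Limits

/-- If `P(Z > t) = (c + o(1)) t^{-κ}` as `t → ∞`, then the mixed Poisson random variable `Λ_Z`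
with intensity `Z` satisfies `P(Λ_Z > t) = (c + o(1)) t^{-κ}` as `t → ∞`. -/
theorem mixedPoisson_tail {Ω : Type*} [MeasurableSpace Ω] (μ : Measure Ω)
    [IsProbabilityMeasure μ] (Z : Ω → ℝ) (hmeas : Measurable Z) (hZ : ∀ ω, 0 ≤ Z ω)
    (c κ : ℝ) (hc : 0 < c) (hκ : 0 < κ)
    (htail : Tendsto (fun t : ℝ => t ^ κ * (μ {ω | t < Z ω}).toReal) atTop (nhds c)) :
    Tendsto (fun t : ℝ => t ^ κ *
        ∑' r : ℕ, (if t < (r : ℝ) then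
          ∫ ω, Real.exp (-Z ω) * Z ω ^ r / (Nat.factorial r) ∂μ else 0))
      atTop (nhds c) := by
  have hFeq : (fun t : ℝ => t ^ κ *
      ∑' r : ℕ, (if t < (r : ℝ) then
        ∫ ω, Real.exp (-Z ω) * Z ω ^ r / (Nat.factorial r) ∂μ else 0))
      = fun t : ℝ => t ^ κ * ∫ ω, S t (Z ω) ∂μ := by
    funext t
    rw [← tsum_integral_swap μ Z hmeas hZ t]
    rfl
  rw [hFeq]
  refine tendsto_order.2 ⟨fun l hl => ?_, fun u hu => ?_⟩
  · -- lower bound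
    have hcont : ContinuousAt (fun b : ℝ => ((b : ℝ) ^ κ)⁻¹ * c) 1 := by
      have h1 : ContinuousAt (fun b : ℝ => b ^ κ) 1 :=
        Real.continuousAt_rpow_const 1 κ (Or.inl one_ne_zero)
      exact (h1.inv₀ (by simp [Real.one_rpow])).mul continuousAt_const
    have htends : Tendsto (fun b : ℝ => ((b : ℝ) ^ κ)⁻¹ * c)
        (nhdsWithin 1 (Set.Ioi 1)) (nhds c) := by
      have h2 := hcont.continuousWithinAt (s := Set.Ioi 1)
      unfold ContinuousWithinAt at h2
      simpa [Real.one_rpow] using h2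
    obtain ⟨b, hbl, hb1⟩ :=
      ((htends.eventually (eventually_gt_nhds hl)).and eventually_mem_nhdsWithin).exists
    rw [Set.mem_Ioi] at hb1
    obtain ⟨θ, δ, hθ, hδ, hkey⟩ := exists_theta_lower hb1
    have hμb := tendsto_tail_scaled μ Z hκ htail (lt_trans zero_lt_one hb1)
    have hexp0 : Tendsto (fun t : ℝ => Real.exp (-δ * t)) atTop (nhds 0) := by
      have h3 : Tendsto (fun t : ℝ => Real.exp (-(δ * t))) atTop (nhds 0) :=
        Real.tendsto_exp_neg_atTop_nhds_zero.comp (Tendsto.const_mul_atTop hδ tendsto_id)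
      simpa [neg_mul] using h3
    have hG : Tendsto (fun t : ℝ =>
        (1 - Real.exp (-δ * t)) * (t ^ κ * (μ {ω | b * t < Z ω}).toReal))
        atTop (nhds ((b ^ κ)⁻¹ * c)) := by
      have h4 := (((tendsto_const_nhds :
        Tendsto (fun _ : ℝ => (1 : ℝ)) atTop (nhds 1)).sub hexp0).mul hμb)
      simpa using h4
    filter_upwards [eventually_ge_atTop (0 : ℝ),
      hG.eventually (eventually_gt_nhds hbl)] with t ht hGt
    have hlow := integral_S_lower μ Z hmeas hZ hθ hδ hkey ht
    have h5 : (1 - Real.exp (-δ * t)) * (t ^ κ * (μ {ω | b * t < Z ω}).toReal)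
        ≤ t ^ κ * ∫ ω, S t (Z ω) ∂μ := by
      have h6 := mul_le_mul_of_nonneg_left hlow (Real.rpow_nonneg ht κ)
      nlinarith [h6]
    exact lt_of_lt_of_le hGt h5
  · -- upper bound
    have hcont : ContinuousAt (fun a : ℝ => ((a : ℝ) ^ κ)⁻¹ * c) 1 := by
      have h1 : ContinuousAt (fun a : ℝ => a ^ κ) 1 :=
        Real.continuousAt_rpow_const 1 κ (Or.inl one_ne_zero)
      exact (h1.inv₀ (by simp [Real.one_rpow])).mul continuousAt_const
    have htends : Tendsto (fun a : ℝ => ((a : ℝ) ^ κ)⁻¹ * c)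
        (nhdsWithin 1 (Set.Iio 1)) (nhds c) := by
      have h2 := hcont.continuousWithinAt (s := Set.Iio 1)
      unfold ContinuousWithinAt at h2
      simpa [Real.one_rpow] using h2
    have hpos : ∀ᶠ a in nhdsWithin (1 : ℝ) (Set.Iio 1), (0 : ℝ) < a :=
      (eventually_gt_nhds zero_lt_one).filter_mono nhdsWithin_le_nhds
    obtain ⟨a, ⟨⟨hau, ha0⟩, ha1⟩⟩ :=
      (((htends.eventually (eventually_lt_nhds hu)).and hpos).and
        eventually_mem_nhdsWithin).exists
    rw [Set.mem_Iio] at ha1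
    obtain ⟨θ, δ, hθ, hδ, hkey⟩ := exists_theta_upper ha0 ha1
    have hμa := tendsto_tail_scaled μ Z hκ htail ha0
    have hexp0 : Tendsto (fun t : ℝ => t ^ κ * Real.exp (-δ * t)) atTop (nhds 0) :=
      tendsto_rpow_mul_exp_neg_mul_atTop_nhds_zero κ δ hδ
    have hH : Tendsto (fun t : ℝ =>
        t ^ κ * (μ {ω | a * t < Z ω}).toReal + t ^ κ * Real.exp (-δ * t))
        atTop (nhds ((a ^ κ)⁻¹ * c)) := by
      have h4 := hμa.add hexp0
      simpa using h4
    filter_upwards [eventually_ge_atTop (0 : ℝ),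
      hH.eventually (eventually_lt_nhds hau)] with t ht hHt
    have hupp := integral_S_upper μ Z hmeas hZ ha0 hθ hkey ht
    have h5 : t ^ κ * ∫ ω, S t (Z ω) ∂μ
        ≤ t ^ κ * (μ {ω | a * t < Z ω}).toReal + t ^ κ * Real.exp (-δ * t) := by
      have h6 := mul_le_mul_of_nonneg_left hupp (Real.rpow_nonneg ht κ)
      nlinarith [h6]
    exact lt_of_le_of_lt h5 hHt
end

section
/- Let Z be an integer-valued nonnegative random variable with P(Z = r) = (c + o(1)) r^{-κ} as r → +∞, where c > 0 and κ > 2. Let Λ_Z be the mixed Poisson random variable with P(Λ_Z = r) = E[e^{-Z} Z^r / r!]. Then P(Λ_Z = r) = (c + o(1)) r^{-κ} as r → +∞. -/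
open MeasureTheory Filter

namespace MP
open Set

noncomputable def pf (β x : ℝ) : ℝ := x ^ β * Real.exp (-x)

lemma pf_nonneg (β : ℝ) {x : ℝ} (hx : 0 ≤ x) : 0 ≤ pf β x :=
  mul_nonneg (Real.rpow_nonneg hx β) (Real.exp_pos _).le

lemma pf_le {β x y : ℝ} (hβ : 0 < β) (hx : 0 < x) (hy : 0 < y)
    (h : β * Real.log (y / x) ≤ y - x) : pf β y ≤ pf β x := by
  have h1 : (y / x) ^ β ≤ Real.exp (y - x) := by
    rw [Real.rpow_def_of_pos (div_pos hy hx)]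
    exact Real.exp_le_exp.mpr (by linarith [h])
  have h2 : pf β y = (y / x) ^ β * (x ^ β * Real.exp (-y)) := by
    rw [Real.div_rpow hy.le hx.le, pf]
    field_simp
  rw [h2, pf]
  calc (y / x) ^ β * (x ^ β * Real.exp (-y))
      ≤ Real.exp (y - x) * (x ^ β * Real.exp (-y)) := by
        apply mul_le_mul_of_nonneg_right h1
        positivity
    _ = x ^ β * Real.exp (-x) := by
        rw [mul_comm, mul_assoc, ← Real.exp_add]
        ring_nf

lemma pf_monotoneOn {β : ℝ} (hβ : 0 < β) : MonotoneOn (pf β) (Icc 0 β) := by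
  intro x hx y hy hxy
  rcases eq_or_lt_of_le hx.1 with h0 | h0
  · rw [pf, ← h0, Real.zero_rpow hβ.ne', zero_mul]
    exact pf_nonneg β hy.1
  · have hy0 : 0 < y := lt_of_lt_of_le h0 hxy
    apply pf_le hβ hy0 h0
    have hl : Real.log (x / y) ≤ x / y - 1 := Real.log_le_sub_one_of_pos (div_pos h0 hy0)
    have : β * Real.log (x / y) ≤ β * (x / y - 1) :=
      mul_le_mul_of_nonneg_left hl hβ.le
    have h2 : β * (x / y - 1) ≤ x - y := by
      rw [div_sub_one hy0.ne', mul_div_assoc', div_le_iff₀ hy0]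
      nlinarith [hy.2, hxy]
    linarith
  
lemma pf_antitoneOn {β : ℝ} (hβ : 0 < β) : AntitoneOn (pf β) (Ici β) := by
  intro x hx y hy hxy
  have hx0 : 0 < x := lt_of_lt_of_le hβ hx
  have hy0 : 0 < y := lt_of_lt_of_le hβ (le_trans hx hxy)
  apply pf_le hβ hx0 hy0
  have hl : Real.log (y / x) ≤ y / x - 1 := Real.log_le_sub_one_of_pos (div_pos hy0 hx0)
  have : β * Real.log (y / x) ≤ β * (y / x - 1) := mul_le_mul_of_nonneg_left hl hβ.le
  have h2 : β * (y / x - 1) ≤ y - x := by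
    rw [div_sub_one hx0.ne', mul_div_assoc', div_le_iff₀ hx0]
    nlinarith [mem_Ici.mp hx, hxy]
  linarith

lemma pf_le_max {β x : ℝ} (hβ : 0 < β) (hx : 0 ≤ x) : pf β x ≤ pf β β := by
  rcases le_total x β with h | h
  · exact pf_monotoneOn hβ ⟨hx, h⟩ ⟨hβ.le, le_refl β⟩ h
  · exact pf_antitoneOn hβ (le_refl β) h h

lemma pf_integrableOn {β : ℝ} (hβ : 0 < β) : IntegrableOn (pf β) (Ioi 0) := by
  have := Real.GammaIntegral_convergent (by linarith : (0:ℝ) < β + 1)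
  apply this.congr_fun _ measurableSet_Ioi
  intro x hx
  simp only [add_sub_cancel_right, pf, mul_comm]

lemma pf_integral {β : ℝ} (hβ : 0 < β) :
    ∫ x in Ioi (0:ℝ), pf β x = Real.Gamma (β + 1) := by
  rw [Real.Gamma_eq_integral (by linarith : (0:ℝ) < β + 1)]
  apply setIntegral_congr_fun measurableSet_Ioi
  intro x hx
  simp only [add_sub_cancel_right, pf, mul_comm]

lemma pf_intervalIntegrable {β : ℝ} (hβ : 0 < β) {a b : ℝ} (ha : 0 ≤ a) (hab : a ≤ b) :
    IntervalIntegrable (pf β) volume a b := by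
  rw [intervalIntegrable_iff_integrableOn_Ioc_of_le hab]
  exact (pf_integrableOn hβ).mono_set (fun x hx => lt_of_le_of_lt ha hx.1)

lemma sum_pf_le {β : ℝ} (hβ : 1 ≤ β) (K : ℕ) :
    ∑ i ∈ Finset.range K, pf β (i + 1) ≤ Real.Gamma (β + 1) + 2 * pf β β := by
  have hβ0 : 0 < β := lt_of_lt_of_le one_pos hβ
  set m := ⌊β⌋₊ with hm
  have hm1 : 1 ≤ m := Nat.le_floor (by exact_mod_cast hβ)
  have hmβ : (m : ℝ) ≤ β := Nat.floor_le hβ0.le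
  have hβm : β < (m : ℝ) + 1 := Nat.lt_floor_add_one β
  -- reduce to K ≥ m + 2
  have key : ∀ K : ℕ, m + 2 ≤ K →
      ∑ i ∈ Finset.range K, pf β (i + 1) ≤ Real.Gamma (β + 1) + 2 * pf β β := by
    intro K hK
    -- split the sum
    have h1 : m - 1 ≤ m + 1 := by omega
    have h2 : m + 1 ≤ K := by omega
    rw [Finset.range_eq_Ico, ← Finset.sum_Ico_consecutive _ (Nat.zero_le (m+1)) h2,
        ← Finset.sum_Ico_consecutive _ (Nat.zero_le (m-1)) h1]
    have pieceA : ∑ i ∈ Finset.Ico 0 (m-1), pf β (i + 1) ≤ ∫ x in (1:ℝ)..(1 + (m-1:ℕ)), pf β x := by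
      have hmono : MonotoneOn (pf β) (Icc (1:ℝ) (1 + (m-1:ℕ))) := by
        apply (pf_monotoneOn hβ0).mono
        apply Icc_subset_Icc (by norm_num)
        have : ((m-1:ℕ):ℝ) = (m:ℝ) - 1 := by
          push_cast [Nat.cast_sub hm1]; ring
        rw [this]; linarith
      have := hmono.sum_le_integral
      rw [Nat.Ico_zero_eq_range]
      refine le_trans (le_of_eq ?_) this
      apply Finset.sum_congr rfl
      intro i _
      norm_num [add_comm]
    have pieceB : ∑ i ∈ Finset.Ico (m-1) (m+1), pf β (i + 1) ≤ 2 * pf β β := by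
      have : ∀ i ∈ Finset.Ico (m-1) (m+1), pf β (i+1) ≤ pf β β := by
        intro i _
        exact pf_le_max hβ0 (by positivity)
      calc ∑ i ∈ Finset.Ico (m-1) (m+1), pf β (i + 1)
          ≤ (Finset.Ico (m-1) (m+1)).card • pf β β := Finset.sum_le_card_nsmul _ _ _ this
        _ = 2 * pf β β := by
            rw [Nat.card_Ico]
            have : m + 1 - (m - 1) = 2 := by omega
            rw [this, nsmul_eq_mul]; norm_num
    have pieceC : ∑ i ∈ Finset.Ico (m+1) K, pf β (i + 1)
        ≤ ∫ x in ((m:ℝ)+1)..((m:ℝ)+1 + (K-(m+1):ℕ)), pf β x := by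
      have hanti : AntitoneOn (pf β) (Icc ((m:ℝ)+1) ((m:ℝ)+1 + (K-(m+1):ℕ))) := by
        apply (pf_antitoneOn hβ0).mono
        intro x hx
        exact le_trans hβm.le hx.1
      have := hanti.sum_le_integral
      rw [Finset.sum_Ico_eq_sum_range]
      refine le_trans (le_of_eq ?_) this
      apply Finset.sum_congr rfl
      intro i _
      push_cast
      ring_nf
    have hint1 : ∫ x in (1:ℝ)..(1 + (m-1:ℕ)), pf β x = ∫ x in Ioc (1:ℝ) (1 + (m-1:ℕ)), pf β x := by
      rw [intervalIntegral.integral_of_le (le_add_of_nonneg_right (Nat.cast_nonneg _))]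
    have hint2 : ∫ x in ((m:ℝ)+1)..((m:ℝ)+1 + (K-(m+1):ℕ)), pf β x
        = ∫ x in Ioc ((m:ℝ)+1) ((m:ℝ)+1 + (K-(m+1):ℕ)), pf β x := by
      rw [intervalIntegral.integral_of_le (le_add_of_nonneg_right (Nat.cast_nonneg _))]
    -- combine the two integrals
    have hgamma : (∫ x in Ioc (1:ℝ) (1 + (m-1:ℕ)), pf β x)
        + (∫ x in Ioc ((m:ℝ)+1) ((m:ℝ)+1 + (K-(m+1):ℕ)), pf β x) ≤ Real.Gamma (β + 1) := by
      have hdisj : Disjoint (Ioc (1:ℝ) (1 + (m-1:ℕ))) (Ioc ((m:ℝ)+1) ((m:ℝ)+1 + (K-(m+1):ℕ))) := by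
        apply Set.disjoint_left.mpr
        intro x hx1 hx2
        have hc : ((m-1:ℕ):ℝ) = (m:ℝ) - 1 := by push_cast [Nat.cast_sub hm1]; ring
        have := hx1.2
        rw [hc] at this
        have := hx2.1
        linarith
      have hsub : (Ioc (1:ℝ) (1 + (m-1:ℕ))) ∪ (Ioc ((m:ℝ)+1) ((m:ℝ)+1 + (K-(m+1):ℕ))) ⊆ Ioi 0 := by
        intro x hx
        rcases hx with hx | hx
        · exact lt_trans one_pos hx.1
        · have : (0:ℝ) < (m:ℝ)+1 := by positivity
          exact lt_trans this hx.1
      rw [← setIntegral_union hdisj measurableSet_Ioc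
          ((pf_integrableOn hβ0).mono_set (fun x hx => hsub (Or.inl hx)))
          ((pf_integrableOn hβ0).mono_set (fun x hx => hsub (Or.inr hx)))]
      rw [← pf_integral hβ0]
      apply setIntegral_mono_set (pf_integrableOn hβ0)
      · exact (ae_restrict_iff' measurableSet_Ioi).2 (ae_of_all _ fun x hx => pf_nonneg β (le_of_lt hx))
      · exact HasSubset.Subset.eventuallyLE hsub
    calc ∑ i ∈ Finset.Ico 0 (m-1), pf β (i + 1) + ∑ i ∈ Finset.Ico (m-1) (m+1), pf β (i + 1)
          + ∑ i ∈ Finset.Ico (m+1) K, pf β (i + 1)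
        ≤ (∫ x in Ioc (1:ℝ) (1 + (m-1:ℕ)), pf β x) + 2 * pf β β
          + (∫ x in Ioc ((m:ℝ)+1) ((m:ℝ)+1 + (K-(m+1):ℕ)), pf β x) := by
          rw [← hint1, ← hint2]
          gcongr -- maybe fails; fallback add_le_add
      _ ≤ Real.Gamma (β + 1) + 2 * pf β β := by linarith [hgamma]
  rcases le_or_gt (m+2) K with h | h
  · exact key K h
  · calc ∑ i ∈ Finset.range K, pf β (i + 1)
        ≤ ∑ i ∈ Finset.range (m+2), pf β (i + 1) := by
          apply Finset.sum_le_sum_of_subset_of_nonneg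
          · exact Finset.range_subset_range.mpr h.le
          · intro i _ _
            exact pf_nonneg β (by positivity)
      _ ≤ _ := key (m+2) le_rfl

lemma summable_pf {β : ℝ} (hβ : 1 ≤ β) : Summable (fun k : ℕ => pf β (k + 1)) := by
  apply summable_of_sum_range_le (c := Real.Gamma (β + 1) + 2 * pf β β)
  · intro k
    exact pf_nonneg β (by positivity)
  · exact sum_pf_le hβ

lemma tsum_pf_le {β : ℝ} (hβ : 1 ≤ β) :
    ∑' k : ℕ, pf β (k + 1) ≤ Real.Gamma (β + 1) + 2 * pf β β :=
  Summable.tsum_le_of_sum_range_le (summable_pf hβ) (sum_pf_le hβ)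

lemma le_tsum_pf {β : ℝ} (hβ : 1 ≤ β) :
    Real.Gamma (β + 1) ≤ (∑' k : ℕ, pf β (k + 1)) + 2 * pf β β := by
  have hβ0 : 0 < β := lt_of_lt_of_le one_pos hβ
  set m := ⌊β⌋₊ with hm
  have hm1 : 1 ≤ m := Nat.le_floor (by exact_mod_cast hβ)
  have hmβ : (m : ℝ) ≤ β := Nat.floor_le hβ0.le
  have hβm : β < (m : ℝ) + 1 := Nat.lt_floor_add_one β
  have hlim : Tendsto (fun n : ℕ => ∫ x in (0:ℝ)..((m:ℝ)+1+n), pf β x) atTop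
      (nhds (Real.Gamma (β + 1))) := by
    rw [← pf_integral hβ0]
    apply intervalIntegral_tendsto_integral_Ioi 0 (pf_integrableOn hβ0)
    apply tendsto_atTop_add_const_left
    exact tendsto_natCast_atTop_atTop
  apply le_of_tendsto hlim
  apply Filter.Eventually.of_forall
  intro n
  -- split the integral
  have e1 : ∫ x in (0:ℝ)..((m:ℝ)+1+n), pf β x
      = (∫ x in (0:ℝ)..(m:ℝ), pf β x) + (∫ x in (m:ℝ)..((m:ℝ)+1), pf β x)
        + ∫ x in ((m:ℝ)+1)..((m:ℝ)+1+n), pf β x := by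
    rw [intervalIntegral.integral_add_adjacent_intervals
        (pf_intervalIntegrable hβ0 le_rfl (Nat.cast_nonneg m))
        (pf_intervalIntegrable hβ0 (Nat.cast_nonneg m) (by linarith)),
      intervalIntegral.integral_add_adjacent_intervals
        (pf_intervalIntegrable hβ0 le_rfl (by positivity))
        (pf_intervalIntegrable hβ0 (by positivity) (le_add_of_nonneg_right (Nat.cast_nonneg n)))]
  rw [e1]
  have bound1 : (∫ x in (0:ℝ)..(m:ℝ), pf β x) ≤ ∑ i ∈ Finset.range m, pf β (i + 1) := by
    have hmono : MonotoneOn (pf β) (Icc (0:ℝ) (0 + (m:ℕ))) := by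
      apply (pf_monotoneOn hβ0).mono
      apply Icc_subset_Icc le_rfl
      rw [zero_add]; exact hmβ
    have := hmono.integral_le_sum
    rw [zero_add] at this
    refine le_trans this (le_of_eq ?_)
    apply Finset.sum_congr rfl
    intro i _
    push_cast
    ring_nf
  have bound2 : (∫ x in (m:ℝ)..((m:ℝ)+1), pf β x) ≤ pf β β := by
    have : (∫ x in (m:ℝ)..((m:ℝ)+1), pf β x) ≤ ∫ _x in (m:ℝ)..((m:ℝ)+1), pf β β := by
      apply intervalIntegral.integral_mono_on (by linarith)
        (pf_intervalIntegrable hβ0 (Nat.cast_nonneg m) (by linarith))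
        intervalIntegrable_const
      intro x hx
      exact pf_le_max hβ0 (le_trans (Nat.cast_nonneg m) hx.1)
    simpa using this
  have bound3 : (∫ x in ((m:ℝ)+1)..((m:ℝ)+1+n), pf β x)
      ≤ ∑ i ∈ Finset.range n, pf β ((m:ℝ)+1 + i) := by
    have hanti : AntitoneOn (pf β) (Icc ((m:ℝ)+1) ((m:ℝ)+1 + (n:ℕ))) := by
      apply (pf_antitoneOn hβ0).mono
      intro x hx
      exact le_trans hβm.le hx.1
    exact hanti.integral_le_sum
  have hcomb : ∑ i ∈ Finset.range m, pf β (i + 1) + ∑ i ∈ Finset.range n, pf β ((m:ℝ)+1 + i)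
      ≤ ∑' k : ℕ, pf β (k + 1) := by
    have e2 : ∑ i ∈ Finset.range n, pf β ((m:ℝ)+1 + i) = ∑ i ∈ Finset.Ico m (m+n), pf β (i + 1) := by
      rw [Finset.sum_Ico_eq_sum_range]
      simp only [Nat.add_sub_cancel_left]
      apply Finset.sum_congr rfl
      intro i _
      push_cast
      ring_nf
    rw [e2, Finset.range_eq_Ico, Finset.sum_Ico_consecutive _ (Nat.zero_le m) (Nat.le_add_right m n),
      ← Finset.range_eq_Ico]
    exact Summable.sum_le_tsum _ (fun i _ => pf_nonneg β (by positivity)) (summable_pf hβ)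
  have hpfβ : 0 ≤ pf β β := pf_nonneg β hβ0.le
  linarith

lemma Gamma_add_le {x s : ℝ} (hx : 0 < x) (hs0 : 0 ≤ s) (hs1 : s ≤ 1) :
    Real.Gamma (x + s) ≤ Real.Gamma x * x ^ s := by
  have hconv := Real.convexOn_log_Gamma
  have h := hconv.2 (mem_Ioi.mpr hx) (mem_Ioi.mpr (by linarith : (0:ℝ) < x + 1))
    (by linarith : (0:ℝ) ≤ 1 - s) hs0 (by ring)
  simp only [smul_eq_mul, Function.comp_apply] at h
  have hpt : (1 - s) * x + s * (x + 1) = x + s := by ring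
  rw [hpt] at h
  have hΓx : 0 < Real.Gamma x := Real.Gamma_pos_of_pos hx
  have hΓxs : 0 < Real.Gamma (x + s) := Real.Gamma_pos_of_pos (by linarith)
  have hlog : Real.log (Real.Gamma (x + 1)) = Real.log x + Real.log (Real.Gamma x) := by
    rw [Real.Gamma_add_one hx.ne', Real.log_mul hx.ne' hΓx.ne']
  rw [hlog] at h
  have h2 : Real.log (Real.Gamma (x + s)) ≤ Real.log (Real.Gamma x) + s * Real.log x := by
    nlinarith
  calc Real.Gamma (x + s) = Real.exp (Real.log (Real.Gamma (x + s))) := (Real.exp_log hΓxs).symm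
    _ ≤ Real.exp (Real.log (Real.Gamma x) + s * Real.log x) := Real.exp_le_exp.mpr h2
    _ = Real.Gamma x * x ^ s := by
        rw [Real.exp_add, Real.exp_log hΓx, Real.rpow_def_of_pos hx, mul_comm s]

lemma le_Gamma_add {x s : ℝ} (hx : 0 < x) (hs0 : 0 ≤ s) (hs1 : s ≤ 1) :
    Real.Gamma x * x * (x + s) ^ (s - 1) ≤ Real.Gamma (x + s) := by
  have hconv := Real.convexOn_log_Gamma
  have hxs : (0:ℝ) < x + s := by linarith
  have h := hconv.2 (mem_Ioi.mpr hxs) (mem_Ioi.mpr (by linarith : (0:ℝ) < x + s + 1))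
    hs0 (by linarith : (0:ℝ) ≤ 1 - s) (by ring)
  simp only [smul_eq_mul, Function.comp_apply] at h
  have hpt : s * (x + s) + (1 - s) * (x + s + 1) = x + 1 := by ring
  rw [hpt] at h
  have hΓx : 0 < Real.Gamma x := Real.Gamma_pos_of_pos hx
  have hΓxs : 0 < Real.Gamma (x + s) := Real.Gamma_pos_of_pos hxs
  have hl1 : Real.log (Real.Gamma (x + 1)) = Real.log x + Real.log (Real.Gamma x) := by
    rw [Real.Gamma_add_one hx.ne', Real.log_mul hx.ne' hΓx.ne']
  have hl2 : Real.log (Real.Gamma (x + s + 1)) = Real.log (x + s) + Real.log (Real.Gamma (x + s)) := by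
    rw [Real.Gamma_add_one hxs.ne', Real.log_mul hxs.ne' hΓxs.ne']
  rw [hl1, hl2] at h
  have h2 : Real.log x + Real.log (Real.Gamma x) + (s - 1) * Real.log (x + s)
      ≤ Real.log (Real.Gamma (x + s)) := by nlinarith
  calc Real.Gamma x * x * (x + s) ^ (s - 1)
      = Real.exp (Real.log x + Real.log (Real.Gamma x) + (s - 1) * Real.log (x + s)) := by
        rw [Real.exp_add, Real.exp_add, Real.exp_log hΓx, Real.exp_log hx,
          Real.rpow_def_of_pos hxs, mul_comm (s-1)]
        ring
    _ ≤ Real.exp (Real.log (Real.Gamma (x + s))) := Real.exp_le_exp.mpr h2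
    _ = Real.Gamma (x + s) := Real.exp_log hΓxs

lemma Gamma_add_nat (n : ℕ) {y : ℝ} (hy : 0 < y) :
    Real.Gamma (y + n) = Real.Gamma y * ∏ i ∈ Finset.range n, (y + i) := by
  induction n with
  | zero => simp
  | succ n ih =>
    have : y + (n + 1 : ℕ) = (y + n) + 1 := by push_cast; ring
    rw [this, Real.Gamma_add_one (by positivity), ih, Finset.prod_range_succ]
    ring

lemma ratio_tendsto (a b : ℝ) :
    Tendsto (fun r : ℕ => ((r:ℝ) + a) / ((r:ℝ) + b)) atTop (nhds 1) := by
  have hb : Tendsto (fun r : ℕ => (r:ℝ) + b) atTop atTop :=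
    (tendsto_atTop_add_const_right _ b tendsto_id).comp tendsto_natCast_atTop_atTop
  have h0 : Tendsto (fun r : ℕ => (a - b) / ((r:ℝ) + b)) atTop (nhds 0) :=
    Tendsto.div_atTop tendsto_const_nhds hb
  have h1 : Tendsto (fun r : ℕ => 1 + (a - b) / ((r:ℝ) + b)) atTop (nhds 1) := by
    have : Tendsto (fun _ : ℕ => (1:ℝ)) atTop (nhds 1) := tendsto_const_nhds
    simpa using this.add h0
  apply h1.congr'
  filter_upwards [hb.eventually_gt_atTop 0] with r hr
  field_simp; ring

lemma rpow_ratio_tendsto (a b t : ℝ) :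
    Tendsto (fun r : ℕ => (((r:ℝ) + a) / ((r:ℝ) + b)) ^ t) atTop (nhds 1) := by
  have hc : Tendsto (fun y : ℝ => y ^ t) (nhds 1) (nhds 1) := by
    have := (Real.continuousAt_rpow_const 1 t (Or.inl one_ne_zero)).tendsto
    rwa [Real.one_rpow] at this
  exact hc.comp (ratio_tendsto a b)

lemma gamma_ratio {κ : ℝ} (hκ : 0 < κ) :
    Tendsto (fun r : ℕ => (r:ℝ) ^ κ * Real.Gamma ((r:ℝ) - κ + 1) / (Nat.factorial r : ℝ))
      atTop (nhds 1) := by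
  set n := ⌊κ⌋₊ with hn
  set s := κ - n with hs
  have hs0 : 0 ≤ s := by
    have := Nat.floor_le hκ.le
    simp [hs]; linarith
  have hs1 : s ≤ 1 := by
    have := Nat.lt_floor_add_one κ
    simp [hs]; linarith
  have hsn : s + n = κ := by simp [hs]
  -- the three factors
  set x : ℕ → ℝ := fun r => (r:ℝ) - κ + 1 with hx
  have hA : Tendsto (fun r : ℕ => (r:ℝ) ^ s * Real.Gamma (x r) / Real.Gamma (x r + s))
      atTop (nhds 1) := by
    have hL : Tendsto (fun r : ℕ => (((r:ℝ) + 0) / ((r:ℝ) + (1 - κ))) ^ s) atTop (nhds 1) :=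
      rpow_ratio_tendsto 0 (1 - κ) s
    have hU : Tendsto (fun r : ℕ => (((r:ℝ) + 0) / ((r:ℝ) + (1 - (n:ℝ)))) ^ s
        * (((r:ℝ) + (1 - (n:ℝ))) / ((r:ℝ) + (1 - κ)))) atTop (nhds 1) := by
      have := (rpow_ratio_tendsto 0 (1 - (n:ℝ)) s).mul (ratio_tendsto (1 - (n:ℝ)) (1 - κ))
      simpa using this
    apply tendsto_of_tendsto_of_tendsto_of_le_of_le' hL hU
    · -- lower bound eventually
      filter_upwards [eventually_gt_atTop ⌈κ⌉₊] with r hr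
      have hrκ : κ < (r:ℝ) := lt_of_le_of_lt (Nat.le_ceil κ) (by exact_mod_cast hr)
      have hxr : 0 < x r := by simp only [hx]; linarith
      have hΓx : 0 < Real.Gamma (x r) := Real.Gamma_pos_of_pos hxr
      have hΓxs : 0 < Real.Gamma (x r + s) := Real.Gamma_pos_of_pos (by linarith)
      have hb := Gamma_add_le hxr hs0 hs1
      have hr0 : (0:ℝ) < r := by
        have : (0:ℕ) < r := lt_of_le_of_lt (Nat.zero_le _) hr
        exact_mod_cast this
      have ex : (r:ℝ) + (1 - κ) = x r := by simp only [hx]; ring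
      rw [add_zero, ex, Real.div_rpow hr0.le hxr.le,
        div_le_div_iff₀ (Real.rpow_pos_of_pos hxr s) hΓxs]
      calc (r:ℝ) ^ s * Real.Gamma (x r + s)
          ≤ (r:ℝ) ^ s * (Real.Gamma (x r) * x r ^ s) := by
            apply mul_le_mul_of_nonneg_left hb (by positivity)
        _ = (r:ℝ) ^ s * Real.Gamma (x r) * x r ^ s := by ring
    · -- upper bound eventually
      filter_upwards [eventually_gt_atTop ⌈κ⌉₊] with r hr
      have hrκ : κ < (r:ℝ) := lt_of_le_of_lt (Nat.le_ceil κ) (by exact_mod_cast hr)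
      have hxr : 0 < x r := by simp only [hx]; linarith
      have hxs : 0 < x r + s := by linarith
      have hΓx : 0 < Real.Gamma (x r) := Real.Gamma_pos_of_pos hxr
      have hΓxs : 0 < Real.Gamma (x r + s) := Real.Gamma_pos_of_pos hxs
      have hr0 : (0:ℝ) < r := by
        have : (0:ℕ) < r := lt_of_le_of_lt (Nat.zero_le _) hr
        exact_mod_cast this
      have ex : (r:ℝ) + (1 - κ) = x r := by simp only [hx]; ring
      have exs : (r:ℝ) + (1 - (n:ℝ)) = x r + s := by simp only [hx, hs]; ring
      have hP : (0:ℝ) < (x r + s) ^ s := Real.rpow_pos_of_pos hxs s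
      have hb := le_Gamma_add hxr hs0 hs1
      have hrw : (x r + s) ^ (s - 1) = (x r + s) ^ s / (x r + s) := by
        rw [Real.rpow_sub hxs, Real.rpow_one]
      have hb2 : Real.Gamma (x r) * x r * (x r + s) ^ s ≤ Real.Gamma (x r + s) * (x r + s) := by
        rw [hrw, mul_div_assoc', div_le_iff₀ hxs] at hb
        linarith
      rw [add_zero, ex, exs, Real.div_rpow hr0.le hxs.le, div_mul_div_comm,
        div_le_div_iff₀ hΓxs (by positivity)]
      calc (r:ℝ) ^ s * Real.Gamma (x r) * ((x r + s) ^ s * x r)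
          = (r:ℝ) ^ s * (Real.Gamma (x r) * x r * (x r + s) ^ s) := by ring
        _ ≤ (r:ℝ) ^ s * (Real.Gamma (x r + s) * (x r + s)) := by
            apply mul_le_mul_of_nonneg_left hb2 (by positivity)
        _ = (r:ℝ) ^ s * (x r + s) * Real.Gamma (x r + s) := by ring
  -- final assembly
  have hP : Tendsto (fun r : ℕ => ∏ i ∈ Finset.range n, ((r:ℝ) / (x r + s + i))) atTop (nhds 1) := by
    have : Tendsto (fun r : ℕ => ∏ i ∈ Finset.range n, (((r:ℝ) + 0) / ((r:ℝ) + (1 - (n:ℝ) + i))))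
        atTop (nhds (∏ _i ∈ Finset.range n, (1:ℝ))) := by
      apply tendsto_finset_prod
      intro i _
      exact ratio_tendsto 0 (1 - (n:ℝ) + i)
    rw [Finset.prod_const_one] at this
    apply this.congr
    intro r
    apply Finset.prod_congr rfl
    intro i _
    congr 1
    · ring
    · simp only [hx, hs]; ring
  have := hA.mul hP
  rw [mul_one] at this
  apply this.congr'
  filter_upwards [eventually_gt_atTop ⌈κ⌉₊] with r hr
  have hrκ : κ < (r:ℝ) := lt_of_le_of_lt (Nat.le_ceil κ) (by exact_mod_cast hr)
  have hxr : 0 < x r := by simp only [hx]; linarith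
  have hxs : 0 < x r + s := by linarith
  have hΓxs : 0 < Real.Gamma (x r + s) := Real.Gamma_pos_of_pos hxs
  have hr0 : (0:ℝ) < r := by
    have : (0:ℕ) < r := lt_of_le_of_lt (Nat.zero_le _) hr
    exact_mod_cast this
  have hfact : (Nat.factorial r : ℝ) = Real.Gamma (x r + s) * ∏ i ∈ Finset.range n, (x r + s + i) := by
    have h1 : ((r:ℝ)) + 1 = (x r + s) + n := by simp only [hx, hs]; ring
    rw [← Real.Gamma_nat_eq_factorial, h1, Gamma_add_nat n hxs]
  have hprodpos : ∀ i ∈ Finset.range n, (0:ℝ) < x r + s + i := by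
    intro i _
    positivity
  have hprod : (0:ℝ) < ∏ i ∈ Finset.range n, (x r + s + i) := Finset.prod_pos hprodpos
  have hrκpow : (r:ℝ) ^ κ = (r:ℝ) ^ s * (r:ℝ) ^ (n:ℕ) := by
    rw [← Real.rpow_natCast (r:ℝ) n, ← Real.rpow_add hr0, hsn]
  have hsplit : ∏ i ∈ Finset.range n, ((r:ℝ) / (x r + s + i))
      = (r:ℝ) ^ (n:ℕ) / ∏ i ∈ Finset.range n, (x r + s + i) := by
    rw [Finset.prod_div_distrib, Finset.prod_const, Finset.card_range]
  rw [hsplit, hfact, hrκpow]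
  field_simp
  ring

lemma stirling_zero :
    Tendsto (fun r : ℕ => (r:ℝ) ^ (r:ℕ) * Real.exp (-(r:ℝ)) / (Nat.factorial r : ℝ))
      atTop (nhds 0) := by
  have hsqrt : Tendsto (fun r : ℕ => Real.sqrt (2 * r)) atTop atTop := by
    have h1 : Tendsto (fun x : ℝ => x ^ (1/2 : ℝ)) atTop atTop := tendsto_rpow_atTop (by norm_num)
    have h2 : Tendsto (fun r : ℕ => 2 * (r:ℝ)) atTop atTop :=
      (tendsto_natCast_atTop_atTop (R := ℝ)).const_mul_atTop two_pos
    apply (h1.comp h2).congr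
    intro r
    simp only [Function.comp_apply]
    rw [← Real.sqrt_eq_rpow]
  have hst : Tendsto (fun r : ℕ => Real.sqrt (2 * r) * Stirling.stirlingSeq r) atTop atTop :=
    Filter.Tendsto.atTop_mul_pos (Real.sqrt_pos.mpr Real.pi_pos) hsqrt
      Stirling.tendsto_stirlingSeq_sqrt_pi
  have h0 := hst.inv_tendsto_atTop
  apply h0.congr'
  filter_upwards [eventually_gt_atTop 0] with r hr
  have hr0 : (0:ℝ) < r := by exact_mod_cast hr
  have hfac : (0:ℝ) < (Nat.factorial r : ℝ) := by exact_mod_cast Nat.factorial_pos r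
  have hpow : ((r:ℝ) / Real.exp 1) ^ (r:ℕ) = (r:ℝ) ^ (r:ℕ) * Real.exp (-(r:ℝ)) := by
    rw [div_pow, Real.exp_neg, ← Real.exp_one_pow, div_eq_mul_inv]
  simp only [Pi.inv_apply]
  have hseq : Stirling.stirlingSeq r
      = (Nat.factorial r : ℝ) / (Real.sqrt (2 * r) * ((r:ℝ) / Real.exp 1) ^ (r:ℕ)) := rfl
  rw [hseq, hpow]
  have hs2 : Real.sqrt (2 * r) ≠ 0 := by positivity
  have hrr : (r:ℝ) ^ (r:ℕ) * Real.exp (-(r:ℝ)) ≠ 0 := by positivity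
  field_simp

lemma max_term {κ : ℝ} (hκ : 0 < κ) :
    Tendsto (fun r : ℕ => (r:ℝ) ^ κ * pf ((r:ℝ) - κ) ((r:ℝ) - κ) / (Nat.factorial r : ℝ))
      atTop (nhds 0) := by
  have h1 : Tendsto (fun r : ℕ => (((r:ℝ) + 0) / ((r:ℝ) + (-κ))) ^ κ) atTop (nhds 1) :=
    rpow_ratio_tendsto 0 (-κ) κ
  have hprod := h1.mul stirling_zero
  rw [mul_zero] at hprod
  apply tendsto_of_tendsto_of_tendsto_of_le_of_le' tendsto_const_nhds hprod
  · filter_upwards [tendsto_natCast_atTop_atTop.eventually_ge_atTop (κ + 1)] with r hr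
    have hβ : (0:ℝ) < (r:ℝ) - κ := by linarith
    have hfac : (0:ℝ) < (Nat.factorial r : ℝ) := by exact_mod_cast Nat.factorial_pos r
    have : 0 ≤ pf ((r:ℝ) - κ) ((r:ℝ) - κ) := pf_nonneg _ hβ.le
    positivity
  · filter_upwards [tendsto_natCast_atTop_atTop.eventually_ge_atTop (κ + 1)] with r hr
    set β := (r:ℝ) - κ with hβdef
    have hβ : (0:ℝ) < β := by simp only [hβdef]; linarith
    have hr0 : (0:ℝ) < r := by linarith
    have hfac : (0:ℝ) < (Nat.factorial r : ℝ) := by exact_mod_cast Nat.factorial_pos r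
    -- key log inequality
    have hlog : Real.log β - Real.log r ≤ -κ / r := by
      have := Real.log_le_sub_one_of_pos (div_pos hβ hr0)
      rw [Real.log_div hβ.ne' hr0.ne'] at this
      have he : β / (r:ℝ) - 1 = -κ / r := by
        rw [hβdef]
        field_simp; ring
      linarith [he ▸ this]
    have hkey : pf β β ≤ (1/β) ^ κ * ((r:ℝ) ^ (r:ℕ) * Real.exp (-(r:ℝ))) := by
      have lhs_eq : pf β β = Real.exp (β * Real.log β - β) := by
        rw [pf, Real.rpow_def_of_pos hβ, ← Real.exp_add]
        ring_nf
      have rhs_eq : (1/β) ^ κ * ((r:ℝ) ^ (r:ℕ) * Real.exp (-(r:ℝ)))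
          = Real.exp (-(κ * Real.log β) + ((r:ℝ) * Real.log r - r)) := by
        rw [Real.rpow_def_of_pos (by positivity : (0:ℝ) < 1/β), one_div, Real.log_inv]
        rw [← Real.exp_log (show (0:ℝ) < (r:ℝ) ^ (r:ℕ) by positivity), Real.log_pow,
          ← Real.exp_add, ← Real.exp_add]
        ring_nf
      rw [lhs_eq, rhs_eq]
      apply Real.exp_le_exp.mpr
      have hmul : (r:ℝ) * (Real.log β - Real.log r) ≤ -κ := by
        have := mul_le_mul_of_nonneg_left hlog hr0.le
        rw [mul_div_cancel₀ _ hr0.ne'] at this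
        linarith
      have hβr : β = (r:ℝ) - κ := rfl
      have hmul' : (r:ℝ) * Real.log β - (r:ℝ) * Real.log (r:ℝ) ≤ -κ := by
        nlinarith [hmul]
      have e : β * Real.log β = (r:ℝ) * Real.log β - κ * Real.log β := by
        rw [hβr]; ring
      linarith [hmul', e, hβr.ge, hβr.le]
    calc (r:ℝ) ^ κ * pf β β / (Nat.factorial r : ℝ)
        ≤ (r:ℝ) ^ κ * ((1/β) ^ κ * ((r:ℝ) ^ (r:ℕ) * Real.exp (-(r:ℝ)))) / (Nat.factorial r : ℝ) := by
          gcongr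
      _ = (((r:ℝ) + 0) / ((r:ℝ) + (-κ))) ^ κ * ((r:ℝ) ^ (r:ℕ) * Real.exp (-(r:ℝ)) / (Nat.factorial r : ℝ)) := by
          rw [← mul_assoc, ← Real.mul_rpow hr0.le (by positivity)]
          have : (r:ℝ) * (1/β) = ((r:ℝ) + 0) / ((r:ℝ) + (-κ)) := by
            rw [hβdef, add_zero, mul_one_div]
            ring_nf
          rw [this]
          ring

lemma S_tendsto {κ : ℝ} (hκ : 0 < κ) :
    Tendsto (fun r : ℕ => (r:ℝ) ^ κ / (Nat.factorial r : ℝ) * ∑' k : ℕ, pf ((r:ℝ) - κ) ((k:ℝ) + 1))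
      atTop (nhds 1) := by
  have hup : Tendsto (fun r : ℕ => (r:ℝ) ^ κ * Real.Gamma ((r:ℝ) - κ + 1) / (Nat.factorial r : ℝ)
      + 2 * ((r:ℝ) ^ κ * pf ((r:ℝ) - κ) ((r:ℝ) - κ) / (Nat.factorial r : ℝ))) atTop (nhds 1) := by
    have := (gamma_ratio hκ).add ((max_term hκ).const_mul 2)
    simpa using this
  have hlo : Tendsto (fun r : ℕ => (r:ℝ) ^ κ * Real.Gamma ((r:ℝ) - κ + 1) / (Nat.factorial r : ℝ)
      - 2 * ((r:ℝ) ^ κ * pf ((r:ℝ) - κ) ((r:ℝ) - κ) / (Nat.factorial r : ℝ))) atTop (nhds 1) := by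
    have := (gamma_ratio hκ).sub ((max_term hκ).const_mul 2)
    simpa using this
  apply tendsto_of_tendsto_of_tendsto_of_le_of_le' hlo hup
  · filter_upwards [tendsto_natCast_atTop_atTop.eventually_ge_atTop (κ + 1)] with r hr
    have hβ : (1:ℝ) ≤ (r:ℝ) - κ := by linarith
    have hfac : (0:ℝ) < (Nat.factorial r : ℝ) := by exact_mod_cast Nat.factorial_pos r
    have h := le_tsum_pf hβ
    have hpos : (0:ℝ) ≤ (r:ℝ) ^ κ / (Nat.factorial r : ℝ) := by positivity
    have := mul_le_mul_of_nonneg_left h hpos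
    rw [mul_add] at this
    calc (r:ℝ) ^ κ * Real.Gamma ((r:ℝ) - κ + 1) / (Nat.factorial r : ℝ)
        - 2 * ((r:ℝ) ^ κ * pf ((r:ℝ) - κ) ((r:ℝ) - κ) / (Nat.factorial r : ℝ))
        = (r:ℝ) ^ κ / (Nat.factorial r : ℝ) * Real.Gamma (((r:ℝ) - κ) + 1)
          - (r:ℝ) ^ κ / (Nat.factorial r : ℝ) * (2 * pf ((r:ℝ) - κ) ((r:ℝ) - κ)) := by ring
      _ ≤ _ := by linarith [this]
  · filter_upwards [tendsto_natCast_atTop_atTop.eventually_ge_atTop (κ + 1)] with r hr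
    have hβ : (1:ℝ) ≤ (r:ℝ) - κ := by linarith
    have hfac : (0:ℝ) < (Nat.factorial r : ℝ) := by exact_mod_cast Nat.factorial_pos r
    have h := tsum_pf_le hβ
    have hpos : (0:ℝ) ≤ (r:ℝ) ^ κ / (Nat.factorial r : ℝ) := by positivity
    have := mul_le_mul_of_nonneg_left h hpos
    rw [mul_add] at this
    calc (r:ℝ) ^ κ / (Nat.factorial r : ℝ) * ∑' k : ℕ, pf ((r:ℝ) - κ) ((k:ℝ) + 1)
        ≤ (r:ℝ) ^ κ / (Nat.factorial r : ℝ) * Real.Gamma (((r:ℝ) - κ) + 1)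
          + (r:ℝ) ^ κ / (Nat.factorial r : ℝ) * (2 * pf ((r:ℝ) - κ) ((r:ℝ) - κ)) := this
      _ = _ := by ring

lemma toeplitz {a : ℕ → ℝ} {w : ℕ → ℕ → ℝ} {c : ℝ}
    (hw : ∀ r k, 0 ≤ w r k)
    (hsum : ∀ᶠ r in atTop, Summable (w r))
    (hS : Tendsto (fun r => ∑' k, w r k) atTop (nhds 1))
    (hk : ∀ k, Tendsto (fun r => w r k) atTop (nhds 0))
    (ha : Tendsto a atTop (nhds c)) :
    Tendsto (fun r => ∑' k, a k * w r k) atTop (nhds c) := by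
  obtain ⟨K₀, hK₀⟩ := Metric.tendsto_atTop.mp ha 1 one_pos
  set B := 1 + ∑ k ∈ Finset.range K₀, |a k - c| with hBdef
  have hB1 : (1:ℝ) ≤ B := by
    have : (0:ℝ) ≤ ∑ k ∈ Finset.range K₀, |a k - c| :=
      Finset.sum_nonneg (fun k _ => abs_nonneg _)
    simp only [hBdef]; linarith
  have hB0 : (0:ℝ) < B := lt_of_lt_of_le one_pos hB1
  have hB : ∀ k, |a k - c| ≤ B := by
    intro k
    rcases lt_or_ge k K₀ with h | h
    · have := Finset.single_le_sum (f := fun k => |a k - c|) (fun i _ => abs_nonneg _)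
        (Finset.mem_range.mpr h)
      simp only [hBdef]; linarith
    · have := hK₀ k h
      rw [Real.dist_eq] at this
      linarith
  rw [Metric.tendsto_nhds]
  intro ε hε
  obtain ⟨K, hK⟩ := Metric.tendsto_atTop.mp ha (ε/4) (by positivity)
  have h1 : Tendsto (fun r => ∑ k ∈ Finset.range K, w r k) atTop (nhds 0) := by
    have := tendsto_finset_sum (Finset.range K) (fun k (_ : k ∈ Finset.range K) => hk k)
    simpa using this
  have hc1 : (0:ℝ) < |c| + 1 := by positivity
  filter_upwards [hsum,
    (Metric.tendsto_nhds.mp hS) (min 1 (ε/(4*(|c|+1)))) (by positivity),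
    (Metric.tendsto_nhds.mp h1) (ε/(4*B)) (by positivity)] with r hr1 hr2 hr3
  rw [Real.dist_eq] at hr2 hr3 ⊢
  have habs_bound : ∀ k, |a k - c| * w r k ≤ B * w r k :=
    fun k => mul_le_mul_of_nonneg_right (hB k) (hw r k)
  have habs : Summable (fun k => |a k - c| * w r k) := by
    apply Summable.of_nonneg_of_le (fun k => mul_nonneg (abs_nonneg _) (hw r k)) habs_bound
    exact hr1.mul_left B
  have hsw2 : Summable (fun k => (a k - c) * w r k) := by
    apply Summable.of_norm_bounded habs
    intro k
    rw [Real.norm_eq_abs, abs_mul, abs_of_nonneg (hw r k)]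
  have hsw : Summable (fun k => a k * w r k) := by
    have : (fun k => a k * w r k) = (fun k => (a k - c) * w r k + c * w r k) := by
      funext k; ring
    rw [this]
    exact hsw2.add (hr1.mul_left c)
  -- decomposition
  have hdecomp : ∑' k, a k * w r k - c = (∑' k, (a k - c) * w r k) + c * ((∑' k, w r k) - 1) := by
    have e1 : ∑' k, (a k - c) * w r k = (∑' k, a k * w r k) - c * ∑' k, w r k := by
      have : (fun k => (a k - c) * w r k) = (fun k => a k * w r k - c * w r k) := by
        funext k; ring
      rw [this, Summable.tsum_sub hsw (hr1.mul_left c), tsum_mul_left]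
    rw [e1]; ring
  have hT2 : |∑' k, w r k - 1| < ε/(4*(|c|+1)) := lt_of_lt_of_le hr2 (min_le_right _ _)
  have hT1 : |∑' k, w r k - 1| < 1 := lt_of_lt_of_le hr2 (min_le_left _ _)
  have htsumw_le : ∑' k, w r k ≤ 2 := by
    have := abs_lt.mp hT1
    linarith [this.2]
  -- first term
  have hfirst : |∑' k, (a k - c) * w r k| ≤ ε/4 + ε/2 := by
    have h0 : |∑' k, (a k - c) * w r k| ≤ ∑' k, |a k - c| * w r k := by
      have hns : Summable (fun k => ‖(a k - c) * w r k‖) := by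
        simpa [Real.norm_eq_abs, abs_mul, abs_of_nonneg (hw r _)] using habs
      have h := norm_tsum_le_tsum_norm hns
      rw [Real.norm_eq_abs] at h
      refine le_trans h (le_of_eq (tsum_congr ?_))
      intro k
      rw [Real.norm_eq_abs, abs_mul, abs_of_nonneg (hw r k)]
    have hsplit := (Summable.sum_add_tsum_nat_add (f := fun k => |a k - c| * w r k) K habs).symm
    have hhead : ∑ k ∈ Finset.range K, |a k - c| * w r k ≤ ε/4 := by
      calc ∑ k ∈ Finset.range K, |a k - c| * w r k
          ≤ ∑ k ∈ Finset.range K, B * w r k :=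
            Finset.sum_le_sum (fun k _ => habs_bound k)
        _ = B * ∑ k ∈ Finset.range K, w r k := by rw [Finset.mul_sum]
        _ ≤ B * |∑ k ∈ Finset.range K, w r k - 0| := by
            apply mul_le_mul_of_nonneg_left _ hB0.le
            rw [sub_zero]
            exact le_abs_self _
        _ ≤ B * (ε/(4*B)) := mul_le_mul_of_nonneg_left hr3.le hB0.le
        _ = ε/4 := by
            field_simp
    have htail : ∑' k, |a (k + K) - c| * w r (k + K) ≤ ε/2 := by
      have htailsum : Summable (fun k => |a (k + K) - c| * w r (k + K)) :=
        (summable_nat_add_iff K).mpr habs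
      have hwtail : Summable (fun k => w r (k + K)) := (summable_nat_add_iff K).mpr hr1
      calc ∑' k, |a (k + K) - c| * w r (k + K)
          ≤ ∑' k, (ε/4) * w r (k + K) := by
            apply Summable.tsum_le_tsum _ htailsum (hwtail.mul_left _)
            intro k
            apply mul_le_mul_of_nonneg_right _ (hw r _)
            have := hK (k + K) (Nat.le_add_left K k)
            rw [Real.dist_eq] at this
            exact this.le
        _ = (ε/4) * ∑' k, w r (k + K) := tsum_mul_left
        _ ≤ (ε/4) * (∑' k, w r k) := by
            apply mul_le_mul_of_nonneg_left _ (by positivity)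
            rw [← Summable.sum_add_tsum_nat_add K hr1]
            have : (0:ℝ) ≤ ∑ k ∈ Finset.range K, w r k :=
              Finset.sum_nonneg (fun k _ => hw r k)
            linarith
        _ ≤ (ε/4) * 2 := mul_le_mul_of_nonneg_left htsumw_le (by positivity)
        _ = ε/2 := by ring
    calc |∑' k, (a k - c) * w r k| ≤ ∑' k, |a k - c| * w r k := h0
      _ = (∑ k ∈ Finset.range K, |a k - c| * w r k) + ∑' k, |a (k + K) - c| * w r (k + K) :=
          hsplit
      _ ≤ ε/4 + ε/2 := add_le_add hhead htail
  have hsecond : |c * ((∑' k, w r k) - 1)| < ε/4 := by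
    rw [abs_mul]
    calc |c| * |∑' k, w r k - 1| ≤ (|c| + 1) * |∑' k, w r k - 1| := by
          apply mul_le_mul_of_nonneg_right _ (abs_nonneg _)
          linarith [abs_nonneg c]
      _ < (|c| + 1) * (ε/(4*(|c|+1))) := by
          apply mul_lt_mul_of_pos_left _ hc1
          · exact hT2
      _ = ε/4 := by field_simp
  calc |∑' k, a k * w r k - c| = |(∑' k, (a k - c) * w r k) + c * ((∑' k, w r k) - 1)| := by
        rw [hdecomp]
    _ ≤ |∑' k, (a k - c) * w r k| + |c * ((∑' k, w r k) - 1)| := abs_add_le _ _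
    _ < (ε/4 + ε/2) + ε/4 := by
        apply add_lt_add_of_le_of_lt hfirst hsecond
    _ = ε := by ring

-- the weight
noncomputable def wgt (κ : ℝ) (r k : ℕ) : ℝ :=
  (r:ℝ) ^ κ * (Real.exp (-(k:ℝ)) * (k:ℝ) ^ r / (Nat.factorial r : ℝ)) / (k:ℝ) ^ κ

lemma wgt_nonneg (κ : ℝ) (r k : ℕ) : 0 ≤ wgt κ r k := by
  unfold wgt
  positivity

lemma wgt_zero {κ : ℝ} (hκ : 0 < κ) (r : ℕ) : wgt κ r 0 = 0 := by
  unfold wgt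
  simp [Real.zero_rpow hκ.ne']

lemma wgt_eq_pf {κ : ℝ} (hκ : 0 < κ) (r k : ℕ) :
    wgt κ r (k + 1) = (r:ℝ) ^ κ / (Nat.factorial r : ℝ) * pf ((r:ℝ) - κ) ((k:ℝ) + 1) := by
  unfold wgt pf
  have hk0 : (0:ℝ) < (k:ℝ) + 1 := by positivity
  have h1 : ((k:ℝ) + 1) ^ ((r:ℝ) - κ) = ((k:ℝ) + 1) ^ (r:ℕ) / ((k:ℝ) + 1) ^ κ := by
    rw [Real.rpow_sub hk0, Real.rpow_natCast]
  have hcast : ((k + 1 : ℕ) : ℝ) = (k:ℝ) + 1 := by push_cast; ring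
  rw [hcast, h1]
  ring

lemma wgt_summable {κ : ℝ} (hκ : 0 < κ) {r : ℕ} (hr : 1 ≤ (r:ℝ) - κ) :
    Summable (wgt κ r) := by
  apply (summable_nat_add_iff 1).mp
  have : (fun k : ℕ => wgt κ r (k + 1))
      = fun k : ℕ => (r:ℝ) ^ κ / (Nat.factorial r : ℝ) * pf ((r:ℝ) - κ) ((k:ℝ) + 1) := by
    funext k; exact wgt_eq_pf hκ r k
  rw [this]
  exact (summable_pf hr).mul_left _

lemma wgt_tsum {κ : ℝ} (hκ : 0 < κ) {r : ℕ} (hr : 1 ≤ (r:ℝ) - κ) :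
    ∑' k, wgt κ r k
      = (r:ℝ) ^ κ / (Nat.factorial r : ℝ) * ∑' k : ℕ, pf ((r:ℝ) - κ) ((k:ℝ) + 1) := by
  rw [Summable.tsum_eq_zero_add (wgt_summable hκ hr), wgt_zero hκ, zero_add]
  rw [← tsum_mul_left]
  apply tsum_congr
  intro k
  exact wgt_eq_pf hκ r k

lemma wgt_S_tendsto {κ : ℝ} (hκ : 0 < κ) :
    Tendsto (fun r : ℕ => ∑' k, wgt κ r k) atTop (nhds 1) := by
  apply (S_tendsto hκ).congr'
  filter_upwards [tendsto_natCast_atTop_atTop.eventually_ge_atTop (κ + 1)] with r hr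
  exact (wgt_tsum hκ (by linarith)).symm

lemma wgt_k_tendsto {κ : ℝ} (hκ : 0 < κ) (k : ℕ) :
    Tendsto (fun r : ℕ => wgt κ r k) atTop (nhds 0) := by
  rcases Nat.eq_zero_or_pos k with hk | hk
  · subst hk
    simp only [wgt_zero hκ]
    exact tendsto_const_nhds
  have hk0 : (0:ℝ) < (k:ℝ) := by exact_mod_cast hk
  -- squeeze between 0 and const * (e*k)^r / r!
  set n := ⌈κ⌉₊ with hn
  have hexp : ∀ᶠ r : ℕ in atTop, (r:ℝ) ^ κ ≤ Real.exp r := by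
    have h1 : Tendsto (fun x : ℝ => Real.exp x / x ^ (n:ℕ)) atTop atTop :=
      Real.tendsto_exp_div_pow_atTop n
    have h2 := (h1.comp (tendsto_natCast_atTop_atTop (R := ℝ))).eventually_ge_atTop 1
    filter_upwards [h2, eventually_ge_atTop 1] with r hr1 hr2
    have hr1' : (1:ℝ) ≤ (r:ℝ) := by exact_mod_cast hr2
    have hrpos : (0:ℝ) < (r:ℝ) ^ (n:ℕ) := by positivity
    have : (r:ℝ) ^ (n:ℕ) ≤ Real.exp r := by
      have := hr1
      simp only [Function.comp_apply] at this
      rw [le_div_iff₀ hrpos] at this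
      linarith
    calc (r:ℝ) ^ κ ≤ (r:ℝ) ^ ((n:ℕ):ℝ) := by
          apply Real.rpow_le_rpow_of_exponent_le hr1'
          exact Nat.le_ceil κ
      _ = (r:ℝ) ^ (n:ℕ) := Real.rpow_natCast _ _
      _ ≤ Real.exp r := this
  have hek : Tendsto (fun r : ℕ => (Real.exp 1 * k) ^ r / (Nat.factorial r : ℝ)) atTop (nhds 0) :=
    FloorSemiring.tendsto_pow_div_factorial_atTop (Real.exp 1 * k)
  have hconst := hek.const_mul (Real.exp (-(k:ℝ)) / (k:ℝ) ^ κ)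
  rw [mul_zero] at hconst
  apply tendsto_of_tendsto_of_tendsto_of_le_of_le' tendsto_const_nhds hconst
  · exact Filter.Eventually.of_forall (fun r => wgt_nonneg κ r k)
  · filter_upwards [hexp] with r hr
    unfold wgt
    rw [div_eq_mul_inv _ ((k:ℝ) ^ κ), div_eq_mul_inv _ ((Nat.factorial r : ℝ))]
    have hfac : (0:ℝ) < (Nat.factorial r : ℝ) := by exact_mod_cast Nat.factorial_pos r
    calc (r:ℝ) ^ κ * (Real.exp (-(k:ℝ)) * (k:ℝ) ^ r * (Nat.factorial r : ℝ)⁻¹) * ((k:ℝ) ^ κ)⁻¹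
        ≤ Real.exp r * (Real.exp (-(k:ℝ)) * (k:ℝ) ^ r * (Nat.factorial r : ℝ)⁻¹) * ((k:ℝ) ^ κ)⁻¹ := by
          apply mul_le_mul_of_nonneg_right (mul_le_mul_of_nonneg_right hr (by positivity))
            (by positivity)
      _ = Real.exp (-(k:ℝ)) / (k:ℝ) ^ κ * ((Real.exp 1 * k) ^ r / (Nat.factorial r : ℝ)) := by
          rw [mul_pow, ← Real.exp_one_pow]
          field_simp


end MP

open MP Set in
/-- If an integer-valued `Z ≥ 0` satisfies `P(Z = r) = (c + o(1)) r^{-κ}`, `κ > 2`, then the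
mixed Poisson `Λ_Z` satisfies `P(Λ_Z = r) = (c + o(1)) r^{-κ}`. -/
theorem mixedPoisson_local {Ω : Type*} [MeasurableSpace Ω] (μ : Measure Ω)
    [IsProbabilityMeasure μ] (Z : Ω → ℝ) (hmeas : Measurable Z)
    (hint : ∀ ω, ∃ k : ℕ, Z ω = k)
    (c κ : ℝ) (hc : 0 < c) (hκ : 2 < κ)
    (hloc : Tendsto (fun r : ℕ => (r : ℝ) ^ κ * (μ {ω | Z ω = r}).toReal) atTop (nhds c)) :
    Tendsto (fun r : ℕ => (r : ℝ) ^ κ *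
        ∫ ω, Real.exp (-Z ω) * Z ω ^ r / (Nat.factorial r) ∂μ)
      atTop (nhds c) := by
  have hκ0 : 0 < κ := by linarith
  set N : Ω → ℕ := fun ω => ⌊Z ω⌋₊ with hNdef
  have hZN : ∀ ω, Z ω = (N ω : ℝ) := by
    intro ω
    obtain ⟨k, hk⟩ := hint ω
    simp only [hNdef, hk, Nat.floor_natCast]
  have hN : Measurable N := hmeas.nat_floor
  set ν : Measure ℕ := μ.map N with hνdef
  have hνsingle : ∀ k : ℕ, (ν {k}).toReal = (μ {ω | Z ω = k}).toReal := by
    intro k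
    rw [hνdef, Measure.map_apply hN (measurableSet_singleton k)]
    have hset : N ⁻¹' {k} = {ω | Z ω = (k:ℝ)} := by
      ext ω
      simp only [mem_preimage, mem_singleton_iff, mem_setOf_eq]
      constructor
      · intro h
        rw [hZN ω, h]
      · intro h
        simp only [hNdef, h, Nat.floor_natCast]
    rw [hset]
  set p : ℕ → ℝ := fun k => (μ {ω | Z ω = k}).toReal with hpdef
  -- the integral identity for r ≥ 1
  have hident : ∀ r : ℕ, 1 ≤ r →
      (∫ ω, Real.exp (-Z ω) * Z ω ^ r / (Nat.factorial r) ∂μ)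
        = ∑' k : ℕ, p k * (Real.exp (-(k:ℝ)) * (k:ℝ) ^ r / (Nat.factorial r : ℝ)) := by
    intro r hr
    set F : ℕ → ℝ := fun k => Real.exp (-(k:ℝ)) * (k:ℝ) ^ r / (Nat.factorial r : ℝ) with hFdef
    have hFmeas : Measurable F := measurable_from_top
    have hFnonneg : ∀ k, 0 ≤ F k := by
      intro k
      simp only [hFdef]
      positivity
    have hFbound : ∀ k : ℕ, ‖F k‖ ≤ pf (r:ℝ) (r:ℝ) / (Nat.factorial r : ℝ) := by
      intro k
      rw [Real.norm_eq_abs, abs_of_nonneg (hFnonneg k)]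
      have hr0 : (0:ℝ) < (r:ℝ) := by exact_mod_cast hr
      have hfac : (0:ℝ) < (Nat.factorial r : ℝ) := by exact_mod_cast Nat.factorial_pos r
      have h1 : F k = pf (r:ℝ) (k:ℝ) / (Nat.factorial r : ℝ) := by
        simp only [hFdef, pf]
        rw [Real.rpow_natCast]
        ring
      rw [h1]
      apply div_le_div_of_nonneg_right _ hfac.le
      exact pf_le_max hr0 (Nat.cast_nonneg k)
    have hνprob : IsProbabilityMeasure ν := Measure.isProbabilityMeasure_map hN.aemeasurable
    have hFint : Integrable F ν := by
      apply Integrable.mono' (integrable_const (pf (r:ℝ) (r:ℝ) / (Nat.factorial r : ℝ)))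
        hFmeas.aestronglyMeasurable
      exact ae_of_all _ hFbound
    have e1 : (∫ ω, Real.exp (-Z ω) * Z ω ^ r / (Nat.factorial r) ∂μ) = ∫ ω, F (N ω) ∂μ := by
      apply integral_congr_ae
      apply ae_of_all
      intro ω
      simp only [hFdef]
      rw [hZN ω]
    have e2 : ∫ ω, F (N ω) ∂μ = ∫ k, F k ∂ν := (integral_map hN.aemeasurable
      hFmeas.aestronglyMeasurable).symm
    have e3 : ∫ k, F k ∂ν = ∑' k, (ν {k}).toReal • F k := integral_countable' hFint
    rw [e1, e2, e3]
    apply tsum_congr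
    intro k
    rw [smul_eq_mul, hνsingle k]
  -- pointwise product identity
  have hprod : ∀ r : ℕ, 1 ≤ r → ∀ k : ℕ,
      (r:ℝ) ^ κ * (p k * (Real.exp (-(k:ℝ)) * (k:ℝ) ^ r / (Nat.factorial r : ℝ)))
        = ((k:ℝ) ^ κ * p k) * wgt κ r k := by
    intro r hr k
    rcases Nat.eq_zero_or_pos k with hk | hk
    · subst hk
      rw [wgt_zero hκ0]
      simp only [Nat.cast_zero]
      rw [zero_pow (by omega : r ≠ 0)]
      ring
    · have hk0 : (0:ℝ) < (k:ℝ) := by exact_mod_cast hk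
      have hkκ : (k:ℝ) ^ κ ≠ 0 := (Real.rpow_pos_of_pos hk0 κ).ne'
      unfold wgt
      field_simp
  have htp := toeplitz (a := fun k => (k:ℝ) ^ κ * p k) (w := wgt κ)
    (wgt_nonneg κ) ?_ (wgt_S_tendsto hκ0) (wgt_k_tendsto hκ0) hloc
  · apply htp.congr'
    filter_upwards [eventually_ge_atTop 1] with r hr
    rw [hident r hr, ← tsum_mul_left]
    apply tsum_congr
    intro k
    exact (hprod r hr k).symm
  · filter_upwards [tendsto_natCast_atTop_atTop.eventually_ge_atTop (κ + 1)] with r hr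
    exact wgt_summable hκ0 (by linarith)
end

section
/- Let h > 0 and let Z be a nonnegative random variable such that hZ is integer-valued and P(hZ = r) = (c + o(1)) (h/r)^κ as r → ∞, with c > 0, κ > 2. Let Λ_Z be mixed Poisson with intensity Z. Then P(Λ_Z = r) = (c h + o(1)) r^{-κ} as r → ∞. -/
/-!
Conditioning on `Z`, `P(Λ_Z = r) = ∑ₖ P(hZ = k) e^{-k/h} (k/h)^r / r!`. Writing
`P(hZ = k) = aₖ (h/k)^κ` with `aₖ → c`, the quantity `r^κ P(Λ_Z = r)` is an average of the `aₖ`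
against the weights `w_r(k) = r^κ (h/k)^κ e^{-k/h} (k/h)^r / r!`, whose mass escapes to infinity as
`r → ∞`. That mass is `(r^κ / r!) ∑ₖ e^{-k/h} (k/h)^{r-κ}`, a Riemann sum for `h Γ(r - κ + 1)`
whose error is at most twice the largest term `e^{-(r-κ)} (r-κ)^{r-κ}`. Log-convexity of `Γ` gives
`r^κ Γ(r - κ + 1) / r! → 1`, Stirling's bound makes the error negligible, so the mass tends to `h`
and the average to `c h`.
-/

open MeasureTheory Filter Set Real Topology
open scoped Nat

lemma exp_neg_mul_pow_div_factorial_le_one {x : ℝ} (hx : 0 ≤ x) (r : ℕ) :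
    exp (-x) * x ^ r / r ! ≤ 1 := by
  rw [mul_div_assoc, exp_neg, inv_mul_le_iff₀ (exp_pos x), mul_one]
  exact pow_div_factorial_le_exp _ hx r

theorem integral_comp_eq_tsum_of_natCast_valued {Ω : Type*} [MeasurableSpace Ω] {μ : Measure Ω}
    [IsFiniteMeasure μ] {X : Ω → ℝ} (hX : Measurable X) (hXℕ : ∀ ω, ∃ k : ℕ, X ω = k)
    {f : ℝ → ℝ} {C : ℝ} (hf : ∀ k : ℕ, |f k| ≤ C) :
    ∫ ω, f (X ω) ∂μ = ∑' k : ℕ, μ.real {ω | X ω = k} * f k := by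
  set N : Ω → ℕ := fun ω => ⌊X ω⌋₊
  have hN : ∀ ω, X ω = N ω := fun ω => by
    obtain ⟨k, hk⟩ := hXℕ ω
    simp [N, hk]
  have hNm : Measurable N := hX.nat_floor
  have hfi : Integrable (fun k : ℕ => f k) (μ.map N) :=
    .of_bound (measurable_from_top.aestronglyMeasurable) C (ae_of_all _ hf)
  calc ∫ ω, f (X ω) ∂μ = ∫ ω, f (N ω) ∂μ := by simp_rw [← hN]
    _ = ∫ k : ℕ, f k ∂(μ.map N) := (integral_map hNm.aemeasurable hfi.1).symm
    _ = ∑' k : ℕ, μ.real {ω | X ω = k} * f k := by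
      rw [integral_countable hfi]
      refine tsum_congr fun k => ?_
      rw [smul_eq_mul, measureReal_def, Measure.map_apply hNm (measurableSet_singleton k),
        ← measureReal_def]
      congr 2
      ext ω
      simp [hN ω]

section Toeplitz

theorem Summable.mul_of_tendsto {b w : ℕ → ℝ} {c : ℝ} (hsum : Summable w) (hw : ∀ k, 0 ≤ w k)
    (hb : Tendsto b atTop (𝓝 c)) : Summable fun k => b k * w k := by
  obtain ⟨M, hM⟩ := isBounded_iff_forall_norm_le.mp (Metric.isBounded_range_of_tendsto b hb)
  refine (hsum.mul_left M).of_norm_bounded fun k => ?_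
  rw [norm_mul, Real.norm_of_nonneg (hw k)]
  exact mul_le_mul_of_nonneg_right (hM _ (mem_range_self k)) (hw k)

variable {ι : Type*} {l : Filter ι} {w : ι → ℕ → ℝ}

theorem tendsto_tsum_mul_of_tendsto_zero {b : ℕ → ℝ} {L : ℝ} (hw : ∀ r k, 0 ≤ w r k)
    (hsum : ∀ᶠ r in l, Summable (w r)) (hL : Tendsto (fun r => ∑' k, w r k) l (𝓝 L))
    (hw₀ : ∀ k, Tendsto (fun r => w r k) l (𝓝 0)) (hb : Tendsto b atTop (𝓝 0)) :
    Tendsto (fun r => ∑' k, b k * w r k) l (𝓝 0) := by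
  rw [Metric.tendsto_nhds]
  intro ε hε
  set δ := ε / (|L| + 1)
  have hδ : 0 < δ := by positivity
  have hδL : δ * L < ε := by
    have : δ * (|L| + 1) = ε := div_mul_cancel₀ _ (by positivity)
    nlinarith [le_abs_self L]
  obtain ⟨K, hK⟩ := eventually_atTop.mp (hb.abs.eventually (gt_mem_nhds (by simpa using hδ)))
  have hbound : Tendsto (fun r => ∑ k ∈ Finset.range K, |b k| * w r k + δ * ∑' k, w r k) l
      (𝓝 (δ * L)) := by
    simpa using (tendsto_finsetSum _ fun k _ => (hw₀ k).const_mul |b k|).add (hL.const_mul δ)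
  filter_upwards [hsum, hbound.eventually (gt_mem_nhds hδL)] with r hr hlt
  have hhead : Summable fun k => if k < K then |b k| * w r k else 0 :=
    summable_of_ne_finset_zero (s := Finset.range K) fun k hk => if_neg (by simpa using hk)
  have habs : Summable fun k => |b k| * w r k := hr.mul_of_tendsto (hw r) hb.abs
  have hsplit : ∀ k, |b k| * w r k ≤ (if k < K then |b k| * w r k else 0) + δ * w r k := by
    intro k
    split_ifs with hk
    · exact le_add_of_nonneg_right (mul_nonneg hδ.le (hw r k))
    · rw [zero_add]
      exact mul_le_mul_of_nonneg_right (hK k (not_lt.mp hk)).le (hw r k)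
  calc dist (∑' k, b k * w r k) 0 ≤ ∑' k, |b k| * w r k := by
        simpa [abs_mul, abs_of_nonneg (hw r _)] using
          norm_tsum_le_tsum_norm (f := fun k => b k * w r k) (by simpa [abs_of_nonneg (hw r _)])
    _ ≤ ∑' k, ((if k < K then |b k| * w r k else 0) + δ * w r k) :=
        habs.tsum_le_tsum hsplit (hhead.add (hr.mul_left δ))
    _ = ∑ k ∈ Finset.range K, |b k| * w r k + δ * ∑' k, w r k := by
        rw [hhead.tsum_add (hr.mul_left δ), tsum_mul_left,
          tsum_eq_sum (s := Finset.range K) fun k hk => if_neg (by simpa using hk),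
          Finset.sum_congr rfl fun k hk => if_pos (by simpa using hk)]
    _ < ε := hlt

theorem tendsto_tsum_mul_of_tendsto {a : ℕ → ℝ} {c L : ℝ} (hw : ∀ r k, 0 ≤ w r k)
    (hsum : ∀ᶠ r in l, Summable (w r)) (hL : Tendsto (fun r => ∑' k, w r k) l (𝓝 L))
    (hw₀ : ∀ k, Tendsto (fun r => w r k) l (𝓝 0)) (ha : Tendsto a atTop (𝓝 c)) :
    Tendsto (fun r => ∑' k, a k * w r k) l (𝓝 (c * L)) := by
  have hac : Tendsto (fun k => a k - c) atTop (𝓝 0) := by simpa using ha.sub_const c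
  have hlim := (hL.const_mul c).add (tendsto_tsum_mul_of_tendsto_zero hw hsum hL hw₀ hac)
  rw [add_zero] at hlim
  refine hlim.congr' ?_
  filter_upwards [hsum] with r hr
  rw [← tsum_mul_left, ← (hr.mul_left c).tsum_add (hr.mul_of_tendsto (hw r) hac)]
  exact tsum_congr fun k => by ring

end Toeplitz

section SumIntegral

lemma iUnion_Ioc_natCast_add_one : ⋃ k : ℕ, Ioc (k : ℝ) (k + 1) = Ioi 0 := by
  ext x
  simp only [mem_iUnion, mem_Ioc, mem_Ioi]
  constructor
  · rintro ⟨k, hk, -⟩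
    exact (Nat.cast_nonneg k).trans_lt hk
  · intro hx
    obtain ⟨k, hk⟩ := Nat.exists_eq_add_of_le' (Nat.one_le_ceil_iff.mpr hx)
    have hlt := Nat.ceil_lt_add_one hx.le
    have hle := Nat.le_ceil x
    rw [hk, Nat.cast_add_one] at hlt hle
    exact ⟨k, by linarith, hle⟩

lemma hasSum_intervalIntegral_natCast {g : ℝ → ℝ} (hg : IntegrableOn g (Ioi 0)) :
    HasSum (fun k : ℕ => ∫ x in (k : ℝ)..k + 1, g x) (∫ x in Ioi 0, g x) := by
  have hdisj : Pairwise (Function.onFun Disjoint fun k : ℕ => Ioc (k : ℝ) (k + 1)) := by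
    intro i j hij
    simpa using pairwise_disjoint_Ioc_intCast ℝ (Nat.cast_injective.ne hij : (i : ℤ) ≠ j)
  simp_rw [intervalIntegral.integral_of_le (le_add_of_nonneg_right zero_le_one)]
  rw [← iUnion_Ioc_natCast_add_one] at hg ⊢
  exact hasSum_integral_iUnion (fun _ => measurableSet_Ioc) hdisj hg

variable {f f' : ℝ → ℝ}

lemma abs_sub_intervalIntegral_le (hf : ∀ x, HasDerivAt f (f' x) x) (hf' : Continuous f')
    (a : ℝ) : |f (a + 1) - ∫ x in a..a + 1, f x| ≤ ∫ x in a..a + 1, |f' x| := by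
  have hcont : Continuous f := continuous_iff_continuousAt.2 fun x => (hf x).continuousAt
  have hosc : ∀ t ∈ uIoc a (a + 1), ‖f (a + 1) - f t‖ ≤ ∫ x in a..a + 1, |f' x| := by
    intro t ht
    rw [uIoc_of_le (by linarith)] at ht
    rw [← intervalIntegral.integral_eq_sub_of_hasDerivAt (fun x _ => hf x)
      (hf'.intervalIntegrable _ _)]
    calc ‖∫ x in t..a + 1, f' x‖ ≤ ∫ x in t..a + 1, ‖f' x‖ :=
          intervalIntegral.norm_integral_le_integral_norm ht.2
      _ ≤ ∫ x in a..a + 1, |f' x| :=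
          intervalIntegral.integral_mono_interval ht.1.le ht.2 le_rfl
            (ae_of_all _ fun _ => abs_nonneg _) (hf'.abs.intervalIntegrable _ _)
  have := intervalIntegral.norm_integral_le_of_norm_le_const hosc
  rwa [intervalIntegral.integral_sub intervalIntegrable_const (hcont.intervalIntegrable _ _),
    intervalIntegral.integral_const, add_sub_cancel_left, abs_one, mul_one, one_smul] at this

lemma integral_Ioi_abs_deriv_of_unimodal (hf : ∀ x, HasDerivAt f (f' x) x)
    (hf' : Continuous f') {m : ℝ} (hm : 0 ≤ m) (hup : ∀ x ∈ Icc 0 m, 0 ≤ f' x)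
    (hdown : ∀ x ∈ Ioi m, f' x ≤ 0) (hf₀ : f 0 = 0) (hlim : Tendsto f atTop (𝓝 0)) :
    IntegrableOn f' (Ioi 0) ∧ ∫ x in Ioi 0, |f' x| = 2 * f m := by
  have hIoc : IntegrableOn f' (Ioc 0 m) := hf'.integrableOn_Icc.mono_set Ioc_subset_Icc_self
  have hIoi : IntegrableOn f' (Ioi m) :=
    integrableOn_Ioi_deriv_of_nonpos' (fun x _ => hf x) hdown hlim
  rw [← Ioc_union_Ioi_eq_Ioi hm, setIntegral_union (Ioc_disjoint_Ioi le_rfl) measurableSet_Ioi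
    hIoc.abs hIoi.abs]
  have hrise : ∫ x in Ioc 0 m, |f' x| = f m := by
    rw [setIntegral_congr_fun measurableSet_Ioc
        fun x hx => abs_of_nonneg (hup x (Ioc_subset_Icc_self hx)),
      ← intervalIntegral.integral_of_le hm, intervalIntegral.integral_eq_sub_of_hasDerivAt
        (fun x _ => hf x) (hf'.intervalIntegrable _ _), hf₀, sub_zero]
  have hfall : ∫ x in Ioi m, |f' x| = f m := by
    rw [setIntegral_congr_fun measurableSet_Ioi fun x hx => abs_of_nonpos (hdown x hx),
      integral_neg, integral_Ioi_of_hasDerivAt_of_nonpos' (fun x _ => hf x) hdown hlim, zero_sub,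
      neg_neg]
  exact ⟨hIoc.union hIoi, by rw [hrise, hfall, two_mul]⟩

/-- On each `[k, k + 1]` the error is at most the variation of `f` there, and the total variation
of a unimodal `f` vanishing at `0` and at infinity is `2 * f m`. -/
theorem abs_tsum_sub_integral_le_of_unimodal (hf : ∀ x, HasDerivAt f (f' x) x)
    (hf' : Continuous f') (hfi : IntegrableOn f (Ioi 0)) {m : ℝ} (hm : 0 ≤ m)
    (hup : ∀ x ∈ Icc 0 m, 0 ≤ f' x) (hdown : ∀ x ∈ Ioi m, f' x ≤ 0) (hf₀ : f 0 = 0)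
    (hlim : Tendsto f atTop (𝓝 0)) :
    Summable (fun k : ℕ => f (k + 1)) ∧ |∑' k : ℕ, f (k + 1) - ∫ x in Ioi 0, f x| ≤ 2 * f m := by
  obtain ⟨hf'i, hvar⟩ := integral_Ioi_abs_deriv_of_unimodal hf hf' hm hup hdown hf₀ hlim
  have hF := hasSum_intervalIntegral_natCast hfi
  have hV := hasSum_intervalIntegral_natCast hf'i.abs
  have hloc : ∀ k : ℕ, ‖f (k + 1) - ∫ x in (k : ℝ)..k + 1, f x‖ ≤ ∫ x in (k : ℝ)..k + 1, |f' x| :=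
    fun k => abs_sub_intervalIntegral_le hf hf' k
  have hsum : Summable fun k : ℕ => f (k + 1) :=
    ((hV.summable.of_norm_bounded hloc).add hF.summable).congr fun k => sub_add_cancel _ _
  refine ⟨hsum, ?_⟩
  rw [← hvar]
  exact (hsum.hasSum.sub hF).norm_le_of_bounded hV hloc

end SumIntegral

section GammaKernel

variable {h s : ℝ}

lemma hasDerivAt_exp_neg_mul_rpow (hs : 1 ≤ s) (y : ℝ) :
    HasDerivAt (fun y => exp (-y) * y ^ s) (exp (-y) * y ^ (s - 1) * (s - y)) y := by
  refine ((hasDerivAt_neg y).exp.mul (hasDerivAt_rpow_const (Or.inr hs))).congr_deriv ?_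
  rcases eq_or_ne y 0 with rfl | hy
  · simp [zero_rpow (by linarith : s ≠ 0), mul_comm]
  · rw [rpow_sub_one hy]
    field_simp
    ring

lemma integral_exp_neg_div_mul_rpow (hh : 0 < h) (hs : 0 ≤ s) :
    IntegrableOn (fun x => exp (-(x / h)) * (x / h) ^ s) (Ioi 0) ∧
      ∫ x in Ioi 0, exp (-(x / h)) * (x / h) ^ s = h * Gamma (s + 1) := by
  have hφ := GammaIntegral_convergent (s := s + 1) (by linarith)
  simp only [add_sub_cancel_right] at hφ
  simp_rw [div_eq_inv_mul _ h]
  refine ⟨(integrableOn_Ioi_comp_mul_left_iff (fun y => exp (-y) * y ^ s) 0 (inv_pos.mpr hh)).mpr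
    (by simpa using hφ), ?_⟩
  rw [integral_comp_mul_left_Ioi (fun y => exp (-y) * y ^ s) 0 (inv_pos.mpr hh), mul_zero,
    Gamma_eq_integral (by linarith), add_sub_cancel_right, inv_inv, smul_eq_mul]

theorem abs_tsum_exp_neg_div_mul_rpow_sub_le (hh : 0 < h) (hs : 1 ≤ s) :
    Summable (fun k : ℕ => exp (-((k + 1) / h)) * ((k + 1) / h) ^ s) ∧
      |∑' k : ℕ, exp (-((k + 1) / h)) * ((k + 1) / h) ^ s - h * Gamma (s + 1)| ≤
        2 * (exp (-s) * s ^ s) := by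
  have hderiv : ∀ x, HasDerivAt (fun x => exp (-(x / h)) * (x / h) ^ s)
      (exp (-(x / h)) * (x / h) ^ (s - 1) * (s - x / h) * (1 / h)) x := fun x => by
    exact (hasDerivAt_exp_neg_mul_rpow hs (x / h)).comp x ((hasDerivAt_id' x).div_const h)
  have hcont : Continuous fun x => exp (-(x / h)) * (x / h) ^ (s - 1) * (s - x / h) * (1 / h) := by
    have := continuous_rpow_const (q := s - 1) (by linarith)
    fun_prop
  obtain ⟨hint, hval⟩ := integral_exp_neg_div_mul_rpow hh (by linarith : 0 ≤ s)
  have hlim : Tendsto (fun x => exp (-(x / h)) * (x / h) ^ s) atTop (𝓝 0) := by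
    refine ((tendsto_rpow_mul_exp_neg_mul_atTop_nhds_zero s 1 one_pos).comp
      (tendsto_id.atTop_div_const hh)).congr fun x => ?_
    simp [mul_comm]
  have hm : 0 ≤ s * h := (mul_pos (by linarith) hh).le
  have hfactor : ∀ x, 0 ≤ x → 0 ≤ exp (-(x / h)) * (x / h) ^ (s - 1) * (1 / h) := fun x hx => by
    positivity
  have hup : ∀ x ∈ Icc 0 (s * h), 0 ≤ exp (-(x / h)) * (x / h) ^ (s - 1) * (s - x / h) * (1 / h) :=
    fun x hx => by
      have : 0 ≤ s - x / h := by rw [sub_nonneg, div_le_iff₀ hh]; exact hx.2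
      nlinarith [hfactor x hx.1]
  have hdown : ∀ x ∈ Ioi (s * h), exp (-(x / h)) * (x / h) ^ (s - 1) * (s - x / h) * (1 / h) ≤ 0 :=
    fun x hx => by
      have : s - x / h ≤ 0 := by rw [sub_nonpos, le_div_iff₀ hh]; exact (mem_Ioi.mp hx).le
      nlinarith [hfactor x (hm.trans (mem_Ioi.mp hx).le)]
  simpa [hval, mul_div_cancel_right₀ _ hh.ne'] using abs_tsum_sub_integral_le_of_unimodal hderiv
    hcont hint hm hup hdown (by simp [zero_rpow (by linarith : s ≠ 0)]) hlim

end GammaKernel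

section GammaRatio

variable {y κ : ℝ}

lemma log_Gamma_add_one (hy : 0 < y) : log (Gamma (y + 1)) = log y + log (Gamma y) := by
  rw [Gamma_add_one hy.ne', log_mul hy.ne' (Gamma_pos_of_pos hy).ne']

lemma rpow_mul_Gamma_add_one_le (hy : 0 < y) (hκ : 0 < κ) :
    y ^ κ * Gamma (y + 1) ≤ Gamma (y + 1 + κ) := by
  have hslope := convexOn_log_Gamma.slope_mono_adjacent (x := y) (y := y + 1) (z := y + 1 + κ)
    hy (by simp only [mem_Ioi]; linarith) (by linarith) (by linarith)
  simp only [Function.comp_apply, log_Gamma_add_one hy, add_sub_cancel_left,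
    add_sub_cancel_right, div_one, le_div_iff₀ hκ] at hslope
  rw [← log_le_log_iff (by positivity) (Gamma_pos_of_pos (by linarith)), log_mul (by positivity)
    (Gamma_pos_of_pos (by linarith)).ne', log_rpow hy, log_Gamma_add_one hy]
  linarith

lemma Gamma_add_le_rpow_mul_Gamma (hy : 0 < y) (hκ : 0 < κ) :
    Gamma (y + κ) ≤ (y + κ) ^ κ * Gamma y := by
  have hyκ : 0 < y + κ := by linarith
  have hslope := convexOn_log_Gamma.slope_mono_adjacent (x := y) (y := y + κ) (z := y + κ + 1)
    hy (by simp only [mem_Ioi]; linarith) (by linarith) (by linarith)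
  simp only [Function.comp_apply, log_Gamma_add_one hyκ, add_sub_cancel_left,
    add_sub_cancel_right, div_one, div_le_iff₀ hκ] at hslope
  rw [← log_le_log_iff (Gamma_pos_of_pos hyκ) (by positivity [Gamma_pos_of_pos hy]),
    log_mul (by positivity) (Gamma_pos_of_pos hy).ne', log_rpow hyκ]
  linarith

theorem tendsto_rpow_mul_Gamma_sub_div_Gamma (hκ : 0 < κ) :
    Tendsto (fun r : ℕ => (r : ℝ) ^ κ * Gamma (r - κ + 1) / Gamma (r + 1)) atTop (𝓝 1) := by
  have hlim : ∀ a : ℝ, Tendsto (fun r : ℕ => ((r : ℝ) / (r + a)) ^ κ) atTop (𝓝 1) := fun a => by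
    simpa using (tendsto_natCast_div_add_atTop a).rpow_const (Or.inr hκ.le)
  refine tendsto_of_tendsto_of_tendsto_of_le_of_le' (hlim 1) (by simpa using hlim (-κ)) ?_ ?_ <;>
    filter_upwards [tendsto_natCast_atTop_atTop.eventually_gt_atTop (κ : ℝ)] with r hr <;>
    have hy : (0 : ℝ) < r - κ := sub_pos.mpr hr
  · have := Gamma_add_le_rpow_mul_Gamma (y := r - κ + 1) (by linarith) hκ
    rw [show (r : ℝ) - κ + 1 + κ = r + 1 by ring] at this
    rw [div_rpow (by positivity) (by positivity), div_le_div_iff₀ (by positivity)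
      (Gamma_pos_of_pos (by positivity))]
    exact le_trans (mul_le_mul_of_nonneg_left this (by positivity)) (le_of_eq (by ring))
  · have := rpow_mul_Gamma_add_one_le hy hκ
    rw [show (r : ℝ) - κ + 1 + κ = r + 1 by ring] at this
    rw [show (r : ℝ) + -κ = r - κ by ring, div_rpow (by positivity) hy.le,
      div_le_div_iff₀ (Gamma_pos_of_pos (by positivity)) (by positivity)]
    exact le_trans (le_of_eq (by ring)) (mul_le_mul_of_nonneg_left this (by positivity))

end GammaRatio

theorem tendsto_rpow_mul_exp_neg_mul_rpow_div_factorial {κ : ℝ} (hκ : 0 ≤ κ) :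
    Tendsto (fun r : ℕ => (r : ℝ) ^ κ * (exp (-(r - κ)) * (r - κ) ^ ((r : ℝ) - κ)) / r !)
      atTop (𝓝 0) := by
  have hbound : Tendsto (fun r : ℕ => exp κ / √(2 * π * r)) atTop (𝓝 0) :=
    tendsto_const_nhds.div_atTop (tendsto_sqrt_atTop.comp
      (tendsto_natCast_atTop_atTop.const_mul_atTop (by positivity)))
  refine squeeze_zero' ?_ ?_ hbound
  · filter_upwards [tendsto_natCast_atTop_atTop.eventually_ge_atTop κ] with r hr
    have : (0 : ℝ) ≤ r - κ := sub_nonneg.mpr hr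
    positivity
  · filter_upwards [tendsto_natCast_atTop_atTop.eventually_ge_atTop κ,
      eventually_gt_atTop 0] with r hr hr₀
    have hr₀' : (0 : ℝ) < r := Nat.cast_pos.mpr hr₀
    have hpow : (r : ℝ) ^ κ * (exp (-(r - κ)) * (r - κ) ^ ((r : ℝ) - κ)) ≤
        exp κ * (r / exp 1) ^ r := by
      have hle : ((r : ℝ) - κ) ^ ((r : ℝ) - κ) ≤ (r : ℝ) ^ ((r : ℝ) - κ) :=
        rpow_le_rpow (sub_nonneg.mpr hr) (by linarith) (sub_nonneg.mpr hr)
      calc (r : ℝ) ^ κ * (exp (-(r - κ)) * (r - κ) ^ ((r : ℝ) - κ))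
          ≤ (r : ℝ) ^ κ * (exp (-(r - κ)) * (r : ℝ) ^ ((r : ℝ) - κ)) := by gcongr
        _ = exp κ * (r / exp 1) ^ r := by
          rw [div_pow, exp_one_pow, ← rpow_natCast, mul_left_comm, ← mul_assoc, mul_assoc,
            ← rpow_add hr₀', add_sub_cancel, neg_sub, exp_sub]
          ring
    have hstir := Stirling.le_factorial_stirling r
    calc (r : ℝ) ^ κ * (exp (-(r - κ)) * (r - κ) ^ ((r : ℝ) - κ)) / r !
        ≤ exp κ * (r / exp 1) ^ r / (√(2 * π * r) * (r / exp 1) ^ r) := by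
          gcongr
        _ = exp κ / √(2 * π * r) := by
          rw [mul_div_mul_right _ _ (by positivity)]

theorem tendsto_rpow_mul_pow_div_factorial (κ x : ℝ) :
    Tendsto (fun r : ℕ => (r : ℝ) ^ κ * x ^ r / r !) atTop (𝓝 0) := by
  have hpoly : Tendsto (fun r : ℕ => (r : ℝ) ^ κ / 2 ^ r) atTop (𝓝 0) := by
    refine ((tendsto_rpow_mul_exp_neg_mul_atTop_nhds_zero κ (log 2) (log_pos one_lt_two)).comp
      tendsto_natCast_atTop_atTop).congr fun r => ?_
    rw [Function.comp_apply, neg_mul, exp_neg, mul_comm (log 2), exp_nat_mul, exp_log two_pos,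
      div_eq_mul_inv]
  have := hpoly.mul (FloorSemiring.tendsto_pow_div_factorial_atTop (2 * x))
  rw [mul_zero] at this
  refine this.congr fun r => ?_
  rw [mul_pow]
  field_simp

section MixedPoissonWeight

noncomputable def mixedPoissonWeight (h κ : ℝ) (r k : ℕ) : ℝ :=
  (r : ℝ) ^ κ * (h / k) ^ κ * (exp (-(k / h)) * (k / h) ^ r / r !)

variable {h κ : ℝ}

lemma mixedPoissonWeight_nonneg (hh : 0 ≤ h) (r k : ℕ) : 0 ≤ mixedPoissonWeight h κ r k := by
  unfold mixedPoissonWeight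
  positivity

lemma tendsto_mixedPoissonWeight_zero (k : ℕ) :
    Tendsto (fun r => mixedPoissonWeight h κ r k) atTop (𝓝 0) := by
  have := (tendsto_rpow_mul_pow_div_factorial κ (k / h)).const_mul ((h / k) ^ κ * exp (-(k / h)))
  rw [mul_zero] at this
  exact this.congr fun r => by unfold mixedPoissonWeight; ring

lemma mixedPoissonWeight_zero_right (hκ : κ ≠ 0) (r : ℕ) : mixedPoissonWeight h κ r 0 = 0 := by
  simp [mixedPoissonWeight, zero_rpow hκ]

lemma mixedPoissonWeight_succ_right (hh : 0 < h) (r k : ℕ) :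
    mixedPoissonWeight h κ r (k + 1) =
      (r : ℝ) ^ κ / r ! * (exp (-((k + 1) / h)) * ((k + 1) / h) ^ ((r : ℝ) - κ)) := by
  have hx : (0 : ℝ) < (k + 1) / h := by positivity
  rw [mixedPoissonWeight, Nat.cast_add_one, rpow_sub hx, rpow_natCast,
    show h / (k + 1) = ((k + 1) / h)⁻¹ from (inv_div _ _).symm, inv_rpow hx.le]
  field_simp

lemma summable_mixedPoissonWeight_and_abs_tsum_sub_le (hh : 0 < h) (hκ : κ ≠ 0) {r : ℕ}
    (hr : κ + 1 ≤ r) :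
    Summable (mixedPoissonWeight h κ r) ∧
      |∑' k, mixedPoissonWeight h κ r k - h * ((r : ℝ) ^ κ * Gamma (r - κ + 1) / Gamma (r + 1))| ≤
        2 * ((r : ℝ) ^ κ * (exp (-(r - κ)) * (r - κ) ^ ((r : ℝ) - κ)) / r !) := by
  obtain ⟨hsum, hbound⟩ := abs_tsum_exp_neg_div_mul_rpow_sub_le hh (s := r - κ) (by linarith)
  have hshift := fun k => mixedPoissonWeight_succ_right (κ := κ) hh r k
  have hsum' : Summable (mixedPoissonWeight h κ r) :=
    (summable_nat_add_iff 1).mp ((hsum.mul_left _).congr fun k => (hshift k).symm)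
  refine ⟨hsum', ?_⟩
  rw [hsum'.tsum_eq_zero_add, mixedPoissonWeight_zero_right hκ, zero_add, tsum_congr hshift,
    tsum_mul_left, Gamma_nat_eq_factorial]
  have hC : 0 ≤ (r : ℝ) ^ κ / r ! := by positivity
  calc _ = (r : ℝ) ^ κ / r ! * |∑' k : ℕ, exp (-((k + 1) / h)) * ((k + 1) / h) ^ ((r : ℝ) - κ) -
        h * Gamma (r - κ + 1)| := by
        rw [← abs_of_nonneg hC, ← abs_mul, abs_of_nonneg hC]
        congr 1
        ring
    _ ≤ (r : ℝ) ^ κ / r ! * (2 * (exp (-(r - κ)) * (r - κ) ^ ((r : ℝ) - κ))) := by gcongr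
    _ = _ := by ring

theorem tendsto_tsum_mixedPoissonWeight (hh : 0 < h) (hκ : 0 < κ) :
    (∀ᶠ r in atTop, Summable (mixedPoissonWeight h κ r)) ∧
      Tendsto (fun r => ∑' k, mixedPoissonWeight h κ r k) atTop (𝓝 h) := by
  have hr : ∀ᶠ r : ℕ in atTop, κ + 1 ≤ r := tendsto_natCast_atTop_atTop.eventually_ge_atTop _
  have hest := hr.mono fun r hr => summable_mixedPoissonWeight_and_abs_tsum_sub_le hh hκ.ne' hr
  have hmain := (tendsto_rpow_mul_Gamma_sub_div_Gamma hκ).const_mul h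
  have herr := (tendsto_rpow_mul_exp_neg_mul_rpow_div_factorial hκ.le).const_mul 2
  rw [mul_one] at hmain
  rw [mul_zero] at herr
  refine ⟨hest.mono fun r hr => hr.1, ?_⟩
  simpa using (squeeze_zero_norm' (hest.mono fun r hr => hr.2) herr).add hmain

lemma rpow_mul_poisson_eq_div_mul_mixedPoissonWeight (hh : 0 < h) (hκ : κ ≠ 0) {r : ℕ}
    (hr : r ≠ 0) (p : ℝ) (k : ℕ) :
    (r : ℝ) ^ κ * (p * (exp (-(k / h)) * (k / h) ^ r / r !)) =
      p / (h / k) ^ κ * mixedPoissonWeight h κ r k := by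
  -- at `k = 0` both sides vanish: `0 ^ r = 0` on the left, `(h / 0) ^ κ = 0 ^ κ = 0` on the right
  rcases eq_or_ne k 0 with rfl | hk
  · simp [mixedPoissonWeight, zero_rpow hκ, hr]
  · have : (h / k) ^ κ ≠ 0 := (rpow_pos_of_pos (by positivity) κ).ne'
    rw [mixedPoissonWeight]
    field_simp

end MixedPoissonWeight

theorem mixedPoisson_local_scaled_general {Ω : Type*} [MeasurableSpace Ω] (μ : Measure Ω)
    [IsProbabilityMeasure μ] (Z : Ω → ℝ) (hmeas : Measurable Z)
    (h c κ : ℝ) (hh : 0 < h) (hκ : 2 < κ)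
    (hint : ∀ ω, ∃ k : ℕ, h * Z ω = k)
    (hloc : Tendsto (fun r : ℕ => (μ {ω | h * Z ω = r}).toReal / (h / r) ^ κ)
      atTop (nhds c)) :
    Tendsto (fun r : ℕ => (r : ℝ) ^ κ *
        ∫ ω, Real.exp (-Z ω) * Z ω ^ r / (Nat.factorial r) ∂μ)
      atTop (nhds (c * h)) := by
  have hκ₀ : 0 < κ := by linarith
  have hseries : ∀ r : ℕ, ∫ ω, exp (-Z ω) * Z ω ^ r / r ! ∂μ =
      ∑' k : ℕ, μ.real {ω | h * Z ω = k} * (exp (-(k / h)) * (k / h) ^ r / r !) := fun r => by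
    have := integral_comp_eq_tsum_of_natCast_valued (μ := μ) (hmeas.const_mul h) hint (C := 1)
      (f := fun x => exp (-(x / h)) * (x / h) ^ r / r !) fun k => by
        rw [abs_of_nonneg (by positivity)]
        exact exp_neg_mul_pow_div_factorial_le_one (by positivity) r
    simpa only [mul_div_cancel_left₀ _ hh.ne'] using this
  obtain ⟨hsum, hmass⟩ := tendsto_tsum_mixedPoissonWeight hh hκ₀
  refine (tendsto_tsum_mul_of_tendsto (mixedPoissonWeight_nonneg hh.le) hsum hmass
    tendsto_mixedPoissonWeight_zero hloc).congr' ?_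
  filter_upwards [eventually_ne_atTop 0] with r hr
  rw [hseries, ← tsum_mul_left]
  exact tsum_congr fun k => (rpow_mul_poisson_eq_div_mul_mixedPoissonWeight hh hκ₀.ne' hr _ k).symm

/-- If `hZ` is integer-valued and `P(hZ = r) = (c + o(1))(h/r)^κ`, `κ > 2`, then the
mixed Poisson `Λ_Z` with intensity `Z` satisfies `P(Λ_Z = r) = (ch + o(1)) r^{-κ}`. -/
theorem mixedPoisson_local_scaled {Ω : Type*} [MeasurableSpace Ω] (μ : Measure Ω)
    [IsProbabilityMeasure μ] (Z : Ω → ℝ) (hmeas : Measurable Z) (hZpos : ∀ ω, 0 ≤ Z ω)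
    (h c κ : ℝ) (hh : 0 < h) (hc : 0 < c) (hκ : 2 < κ)
    (hint : ∀ ω, ∃ k : ℕ, h * Z ω = k)
    (hloc : Tendsto (fun r : ℕ => (μ {ω | h * Z ω = r}).toReal / (h / r) ^ κ)
      atTop (nhds c)) :
    Tendsto (fun r : ℕ => (r : ℝ) ^ κ *
        ∫ ω, Real.exp (-Z ω) * Z ω ^ r / (Nat.factorial r) ∂μ)
      atTop (nhds (c * h)) :=
  mixedPoisson_local_scaled_general μ Z hmeas h c κ hh hκ hint hloc
end

section
/- For every ε > 0 and every integer r large enough, the integral ∫₀^{r(1−ε_r)} e^{-x} x^r / r! dx is at most r^{-0.3 log r}, where ε_r = r^{-1/2} log r. -/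
/-!
On `[0, r]` the kernel `e^{-x} x^r` increases towards its mode `r`, so its integral up to
`b = r (1 - ε)` is at most `b e^{-b} b^r`. Since `r^r e^{-r} ≤ r!` and
`log (1 - ε) ≤ -ε - ε² / 2`, this is at most `r! · r e^{-r ε² / 2}`.
For `ε = r^{-1/2} log r` we have `r ε² = (log r)²`, and
`r e^{-(log r)² / 2} ≤ r^{-0.3 log r}` once `log r ≥ 5`.
-/

open Filter Real

namespace Real

lemma log_one_sub_le_neg_sub_sq_div_two {ε : ℝ} (h0 : 0 ≤ ε) (h1 : ε < 1) :
    log (1 - ε) ≤ -ε - ε ^ 2 / 2 := by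
  have hsum := hasSum_pow_div_log_of_abs_lt_one (abs_lt.2 ⟨by linarith, h1⟩)
  have h := sum_le_hasSum (Finset.range 2) (fun n _ => by positivity) hsum
  norm_num [Finset.sum_range_succ] at h
  linarith

lemma exp_mul_mul_one_sub_pow_le {ε : ℝ} (h0 : 0 ≤ ε) (h1 : ε < 1) (r : ℕ) :
    exp (r * ε) * (1 - ε) ^ r ≤ exp (-(r * ε ^ 2 / 2)) := by
  rw [← exp_log (sub_pos.2 h1), ← exp_nat_mul, ← exp_add, exp_le_exp]
  nlinarith [log_one_sub_le_neg_sub_sq_div_two h0 h1, (Nat.cast_nonneg r : (0 : ℝ) ≤ r)]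

lemma exp_neg_mul_pow_le_factorial (r : ℕ) : exp (-r) * (r : ℝ) ^ r ≤ r.factorial := by
  rw [exp_neg, inv_mul_le_iff₀ (exp_pos _), ← div_le_iff₀ (by positivity)]
  exact pow_div_factorial_le_exp (x := (r : ℝ)) (Nat.cast_nonneg r) r

lemma monotoneOn_exp_neg_mul_pow (r : ℕ) :
    MonotoneOn (fun x : ℝ => exp (-x) * x ^ r) (Set.Icc 0 r) := by
  rintro x ⟨hx0, -⟩ b ⟨-, hbr⟩ hxb
  rcases hxb.eq_or_lt with rfl | hxb
  · rfl
  have hb : 0 < b := hx0.trans_lt hxb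
  -- `x / b ≤ e^{x/b - 1}`, and raising to the power `r ≥ b` only helps since `x / b - 1 ≤ 0`.
  have hratio : (x / b) ^ r ≤ exp (x - b) := calc
    (x / b) ^ r ≤ exp (x / b - 1) ^ r := by
      gcongr
      linarith [add_one_le_exp (x / b - 1)]
    _ = exp (r * (x / b - 1)) := (exp_nat_mul _ r).symm
    _ ≤ exp (b * (x / b - 1)) :=
      exp_le_exp.2 <| mul_le_mul_of_nonpos_right hbr <| by
        rw [sub_nonpos, div_le_one hb]; exact hxb.le
    _ = exp (x - b) := by field_simp
  calc exp (-x) * x ^ r = exp (-x) * b ^ r * (x / b) ^ r := by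
        rw [div_pow, mul_assoc, mul_div_cancel₀ _ (by positivity)]
    _ ≤ exp (-x) * b ^ r * exp (x - b) := by gcongr
    _ = exp (-b) * b ^ r := by rw [mul_right_comm, ← exp_add]; ring_nf

lemma integral_exp_neg_mul_pow_le {r : ℕ} {b : ℝ} (hb : 0 ≤ b) (hbr : b ≤ r) :
    ∫ x in (0 : ℝ)..b, exp (-x) * x ^ r ≤ b * (exp (-b) * b ^ r) := by
  have hmono := monotoneOn_exp_neg_mul_pow r
  calc ∫ x in (0 : ℝ)..b, exp (-x) * x ^ r ≤ ∫ _ in (0 : ℝ)..b, exp (-b) * b ^ r := by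
        refine intervalIntegral.integral_mono_on hb
          (Continuous.intervalIntegrable (by fun_prop) _ _) intervalIntegrable_const fun x hx => ?_
        exact hmono ⟨hx.1, hx.2.trans hbr⟩ ⟨hb, hbr⟩ hx.2
    _ = b * (exp (-b) * b ^ r) := by simp [mul_left_comm]

lemma integral_gamma_density_le {ε : ℝ} (h0 : 0 ≤ ε) (h1 : ε < 1) (r : ℕ) :
    ∫ x in (0 : ℝ)..r * (1 - ε), exp (-x) * x ^ r / r.factorial ≤
      r * exp (-(r * ε ^ 2 / 2)) := by
  set b : ℝ := r * (1 - ε)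
  have hb : 0 ≤ b := mul_nonneg r.cast_nonneg (by linarith)
  have hbr : b ≤ r := mul_le_of_le_one_right r.cast_nonneg (by linarith)
  have hsplit : exp (-b) * b ^ r = exp (-r) * (r : ℝ) ^ r * (exp (r * ε) * (1 - ε) ^ r) := by
    rw [mul_pow, show -b = -r + r * ε by ring, exp_add]; ring
  have hfact : (0 : ℝ) < r.factorial := by positivity
  rw [intervalIntegral.integral_div, div_le_iff₀ hfact]
  calc ∫ x in (0 : ℝ)..b, exp (-x) * x ^ r ≤ b * (exp (-b) * b ^ r) :=
        integral_exp_neg_mul_pow_le hb hbr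
    _ ≤ r * (r.factorial * exp (-(r * ε ^ 2 / 2))) := by
        rw [hsplit]
        gcongr
        · exact exp_neg_mul_pow_le_factorial r
        · exact exp_mul_mul_one_sub_pow_le h0 h1 r
    _ = r * exp (-(r * ε ^ 2 / 2)) * r.factorial := by ring

lemma tendsto_rpow_neg_mul_log_atTop {s : ℝ} (hs : 0 < s) :
    Tendsto (fun x : ℝ => x ^ (-s) * log x) atTop (nhds 0) := by
  refine (isLittleO_log_rpow_atTop hs).tendsto_div_nhds_zero.congr' ?_
  filter_upwards [eventually_ge_atTop 0] with x hx
  rw [rpow_neg hx, div_eq_inv_mul]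

end Real

/-- Lower-tail estimate for the incomplete Gamma integral:
`∫₀^{r(1-ε_r)} e^{-x} x^r / r! dx ≤ r^{-0.3 log r}` for all large `r`,
where `ε_r = r^{-1/2} log r`. -/
theorem gamma_lower_tail :
    ∀ᶠ r : ℕ in atTop,
      (∫ x in (0 : ℝ)..((r : ℝ) * (1 - (r : ℝ) ^ (-(1 : ℝ) / 2) * Real.log r)),
          Real.exp (-x) * x ^ r / (Nat.factorial r))
        ≤ (r : ℝ) ^ (-(0.3) * Real.log r) := by
  have hε : ∀ᶠ r : ℕ in atTop, (r : ℝ) ^ (-(1 : ℝ) / 2) * log r < 1 := by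
    have h := (tendsto_rpow_neg_mul_log_atTop (s := 1 / 2) (by norm_num)).comp
      tendsto_natCast_atTop_atTop
    exact (h.eventually_lt_const one_pos).mono fun r hr => by simpa [neg_div] using hr
  have hlog : ∀ᶠ r : ℕ in atTop, (5 : ℝ) ≤ log r :=
    (tendsto_log_atTop.comp tendsto_natCast_atTop_atTop).eventually_ge_atTop 5
  filter_upwards [hε, hlog, eventually_ge_atTop 1] with r hε1 hL hr1
  have hr : (0 : ℝ) < r := by exact_mod_cast hr1
  set L := log r
  have hε0 : 0 ≤ (r : ℝ) ^ (-(1 : ℝ) / 2) * L := by positivity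
  have hrε : (r : ℝ) * ((r : ℝ) ^ (-(1 : ℝ) / 2) * L) ^ 2 = L ^ 2 := by
    rw [mul_pow, ← rpow_mul_natCast hr.le]
    norm_num [rpow_neg_one, hr.ne']
  refine (integral_gamma_density_le hε0 hε1 r).trans ?_
  rw [hrε, rpow_def_of_pos hr]
  nth_rewrite 1 [← exp_log hr]
  rw [← exp_add, exp_le_exp]
  nlinarith
end

section
/- For every integer r large enough, the integral ∫_{r(1+ε_r)}^{∞} e^{-x} x^r / r! dx is at most r^{-0.3 log r}, where ε_r = r^{-1/2} log r. -/
open MeasureTheory Filter Real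

/-! For `x ≥ a > r` the tangent-line bound `log x ≤ log a + x / a - 1` dominates `e^{-x} x^r` by an
exponential of rate `1 - r / a`, whence `∫_a^∞ e^{-x} x^r dx ≤ a^{r+1} e^{-a} / (a - r)`.
At `a = r (1 + ε)`, together with `r^r ≤ e^r r!`, this bounds the tail by
`((1 + ε) e^{-ε})^r (1 + ε) / ε ≤ r e^{-r ε² / 3}`. Since `r ε_r² = (log r)²`, the tail is at most
`r e^{-(log r)² / 3} ≤ r^{-0.3 log r}` as soon as `log r ≥ 30`. -/

lemma one_add_mul_exp_neg_le {ε : ℝ} (h0 : 0 ≤ ε) (h1 : ε ≤ 1 / 3) :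
    (1 + ε) * exp (-ε) ≤ 1 - ε ^ 2 / 3 := by
  have hexp : 1 + ε + ε ^ 2 / 2 ≤ exp ε := by
    have := quadratic_le_exp_of_nonneg h0; linarith
  have hpoly : 1 + ε ≤ (1 - ε ^ 2 / 3) * (1 + ε + ε ^ 2 / 2) := by
    nlinarith [mul_nonneg (mul_nonneg h0 h0) (by nlinarith : 0 ≤ 1 - 2 * ε - ε ^ 2)]
  have hcoef : 0 ≤ 1 - ε ^ 2 / 3 := by nlinarith
  calc (1 + ε) * exp (-ε) ≤ (1 - ε ^ 2 / 3) * exp ε * exp (-ε) := by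
        gcongr; exact hpoly.trans (by gcongr)
    _ = 1 - ε ^ 2 / 3 := by rw [mul_assoc, ← exp_add, add_neg_cancel, exp_zero, mul_one]

lemma one_add_mul_exp_neg_le_exp {ε : ℝ} (h0 : 0 ≤ ε) (h1 : ε ≤ 1 / 3) :
    (1 + ε) * exp (-ε) ≤ exp (-(ε ^ 2 / 3)) :=
  (one_add_mul_exp_neg_le h0 h1).trans (by linarith [add_one_le_exp (-(ε ^ 2 / 3))])

lemma exp_neg_mul_pow_le {a x : ℝ} (ha : 0 < a) (hax : a ≤ x) (r : ℕ) :
    exp (-x) * x ^ r ≤ a ^ r * exp (-r) * exp ((r / a - 1) * x) := by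
  have hx : 0 < x := ha.trans_le hax
  have hpow : x ^ r ≤ a ^ r * exp (r * (x / a - 1)) := by
    have hxa : x / a ≤ exp (x / a - 1) := by linarith [add_one_le_exp (x / a - 1)]
    calc x ^ r = a ^ r * (x / a) ^ r := by rw [div_pow, mul_div_cancel₀ _ (by positivity)]
      _ ≤ a ^ r * exp (x / a - 1) ^ r := by gcongr
      _ = a ^ r * exp (r * (x / a - 1)) := by rw [← exp_nat_mul]
  calc exp (-x) * x ^ r ≤ exp (-x) * (a ^ r * exp (r * (x / a - 1))) := by gcongr
    _ = a ^ r * exp (-r) * exp ((r / a - 1) * x) := by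
      rw [mul_left_comm, mul_assoc, ← exp_add, ← exp_add]
      congr 2
      field_simp
      ring

lemma integral_Ioi_exp_neg_mul_pow_le {a : ℝ} (r : ℕ) (hra : (r : ℝ) < a) :
    ∫ x in Set.Ioi a, exp (-x) * x ^ r ≤ a ^ (r + 1) * exp (-a) / (a - r) := by
  have ha : 0 < a := (Nat.cast_nonneg r).trans_lt hra
  have hk : (r : ℝ) / a - 1 < 0 := by rw [sub_neg, div_lt_one ha]; exact hra
  calc ∫ x in Set.Ioi a, exp (-x) * x ^ r
      ≤ ∫ x in Set.Ioi a, a ^ r * exp (-r) * exp ((r / a - 1) * x) := by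
        refine integral_mono_of_nonneg ?_ ((integrableOn_exp_mul_Ioi hk a).const_mul _) ?_
        · exact ae_restrict_of_forall_mem measurableSet_Ioi fun x hx =>
            have : 0 < x := ha.trans hx
            by positivity
        · exact ae_restrict_of_forall_mem measurableSet_Ioi fun x hx =>
            exp_neg_mul_pow_le ha (le_of_lt hx) r
    _ = a ^ (r + 1) * exp (-a) / (a - r) := by
      have he : exp (-r) * exp ((r / a - 1) * a) = exp (-a) := by
        rw [← exp_add]; congr 1; field_simp; ring
      have hk' : (r : ℝ) / a - 1 = -((a - r) / a) := by field_simp; ring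
      have : a - r ≠ 0 := by linarith
      rw [integral_const_mul, integral_exp_mul_Ioi hk, ← he, hk']
      field_simp
      ring

lemma integral_Ioi_exp_neg_mul_pow_div_factorial_le {r : ℕ} (hr : 0 < r) {ε : ℝ} (hε : 0 < ε) :
    ∫ x in Set.Ioi (r * (1 + ε)), exp (-x) * x ^ r / r.factorial
      ≤ ((1 + ε) * exp (-ε)) ^ r * ((1 + ε) / ε) := by
  have hr' : (0 : ℝ) < r := Nat.cast_pos.mpr hr
  have hra : (r : ℝ) < r * (1 + ε) := by nlinarith
  have hstirling : (r : ℝ) ^ r / r.factorial / exp r ≤ 1 :=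
    (div_le_one (exp_pos _)).mpr (pow_div_factorial_le_exp _ hr'.le r)
  calc ∫ x in Set.Ioi (r * (1 + ε)), exp (-x) * x ^ r / r.factorial
      = (∫ x in Set.Ioi (r * (1 + ε)), exp (-x) * x ^ r) / r.factorial := integral_div _ _
    _ ≤ (r * (1 + ε)) ^ (r + 1) * exp (-(r * (1 + ε))) / (r * (1 + ε) - r) / r.factorial := by
      gcongr; exact integral_Ioi_exp_neg_mul_pow_le r hra
    _ = (r : ℝ) ^ r / r.factorial / exp r * (((1 + ε) * exp (-ε)) ^ r * ((1 + ε) / ε)) := by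
      rw [show -(r * (1 + ε)) = r * (-ε) + -r by ring, exp_add, exp_nat_mul, exp_neg (r : ℝ),
        mul_pow, mul_pow]
      field_simp [hε.ne']
      ring
    _ ≤ ((1 + ε) * exp (-ε)) ^ r * ((1 + ε) / ε) := by
      apply mul_le_of_le_one_left _ hstirling
      positivity

lemma tendsto_log_div_sqrt_atTop : Tendsto (fun x => log x / √x) atTop (nhds 0) := by
  simpa only [sqrt_eq_rpow] using (isLittleO_log_rpow_atTop one_half_pos).tendsto_div_nhds_zero

lemma mul_exp_neg_log_sq_div_three_le_rpow {R : ℝ} (hR : 0 < R) (hL : 30 ≤ log R) :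
    R * exp (-(log R ^ 2 / 3)) ≤ R ^ (-0.3 * log R) := by
  rw [rpow_def_of_pos hR]
  nth_rewrite 1 [← exp_log hR]
  rw [← exp_add]
  exact exp_le_exp.mpr (by nlinarith)

/-- Upper-tail estimate for the incomplete Gamma integral:
`∫_{r(1+ε_r)}^∞ e^{-x} x^r / r! dx ≤ r^{-0.3 log r}` for all large `r`,
where `ε_r = r^{-1/2} log r`. -/
theorem gamma_upper_tail :
    ∀ᶠ r : ℕ in atTop,
      (∫ x in Set.Ioi ((r : ℝ) * (1 + (r : ℝ) ^ (-(1 : ℝ) / 2) * Real.log r)),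
          Real.exp (-x) * x ^ r / (Nat.factorial r))
        ≤ (r : ℝ) ^ (-(0.3) * Real.log r) := by
  have hcast := tendsto_natCast_atTop_atTop (R := ℝ)
  filter_upwards [eventually_gt_atTop 0,
    hcast.eventually (tendsto_log_atTop.eventually_ge_atTop 30),
    hcast.eventually (tendsto_log_div_sqrt_atTop.eventually_le_const (by norm_num : (0 : ℝ) < 1 / 3))]
    with r hr hL hsmall
  have hr' : (0 : ℝ) < r := Nat.cast_pos.mpr hr
  have hsqrt : (r : ℝ) ^ (-(1 : ℝ) / 2) = (√r)⁻¹ := by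
    rw [neg_div, rpow_neg hr'.le, sqrt_eq_rpow]
  rw [hsqrt]
  set ε := (√(r : ℝ))⁻¹ * log r with hε
  have hε0 : 0 < ε := by positivity
  have hrε2 : r * ε ^ 2 = log r ^ 2 := by
    rw [hε, mul_pow, inv_pow, sq_sqrt hr'.le]; field_simp
  have hε3 : ε ≤ 1 / 3 := by simpa [hε, div_eq_inv_mul] using hsmall
  have hrε : r * ε = √r * log r := by
    rw [hε]; field_simp; rw [sq_sqrt hr'.le]
  have hone : (1 + ε) / ε ≤ r := by
    rw [div_le_iff₀ hε0]
    nlinarith [one_le_sqrt.mpr (Nat.one_le_cast.mpr hr)]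
  calc _ ≤ ((1 + ε) * exp (-ε)) ^ r * ((1 + ε) / ε) :=
        integral_Ioi_exp_neg_mul_pow_div_factorial_le hr hε0
    _ ≤ exp (-(ε ^ 2 / 3)) ^ r * r := by
        gcongr
        exact one_add_mul_exp_neg_le_exp hε0.le hε3
    _ = r * exp (-(log r ^ 2 / 3)) := by
        rw [← exp_nat_mul, ← hrε2]; ring_nf
    _ ≤ (r : ℝ) ^ (-(0.3) * log r) := mul_exp_neg_log_sq_div_three_le_rpow hr' hL
end
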